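/- arXiv:2409.07425 — 8 statements merged into one kernel-verified Lean document; each statement's English description precedes it below -/
import Mathlib

section
/- Let H be a real Hilbert space and (P_t)_{t≥0} a strongly continuous semigroup of self-adjoint continuous linear operators on H. If P_{t₀} is a compact operator for some t₀ > 0, then P_t is a compact operator for every t > 0; moreover there exist an index set ι, a Hilbert (orthonormal) basis (φ_i)_{i∈ι} of H and real numbers (λ_i)_{i∈ι} such that P_t φ_i = exp(−λ_i t) · φ_i for every i ∈ ι and every t ≥ 0. -/
open scoped RealInnerProductSpace NNReal
open Set Submodule Metric Filter Topology

section Aux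

variable {H : Type*} [NormedAddCommGroup H] [InnerProductSpace ℝ H]

/-- A symmetric operator whose square is compact is compact. -/
theorem aux_compact_of_sq [CompleteSpace H] {S : H →L[ℝ] H}
    (hsym : ∀ x y : H, ⟪S x, y⟫ = ⟪x, S y⟫)
    (h2 : IsCompactOperator fun x => S (S x)) : IsCompactOperator (⇑S) := by
  classical
  -- key inequality
  have key : ∀ x y : H, ‖S x - S y‖ ^ 2 ≤ ‖S (S x) - S (S y)‖ * ‖x - y‖ := by
    intro x y
    have h1 : ‖S x - S y‖ ^ 2 = ⟪S (S (x - y)), x - y⟫ := by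
      rw [← map_sub, ← real_inner_self_eq_norm_sq, hsym, real_inner_comm]
    rw [h1, map_sub, map_sub]
    exact real_inner_le_norm _ _
  rw [isCompactOperator_iff_exists_mem_nhds_isCompact_closure_image]
  refine ⟨closedBall 0 1, closedBall_mem_nhds _ one_pos, ?_⟩
  rw [isCompact_iff_totallyBounded_isComplete]
  refine ⟨TotallyBounded.closure ?_, isClosed_closure.isComplete⟩
  -- total boundedness of `S '' closedBall 0 1`
  rw [Metric.totallyBounded_iff]
  intro ε hε
  set δ : ℝ := ε ^ 2 / 8 with hδdef
  have hδ : 0 < δ := by positivity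
  -- the image of the ball under S ∘ S is totally bounded
  have htb2 : TotallyBounded ((fun x => S (S x)) '' closedBall 0 1) := by
    have hc : IsCompactOperator (⇑((S.comp S : H →L[ℝ] H) : H →ₗ[ℝ] H)) := by
      exact h2
    obtain ⟨K, hK, hKsub⟩ := hc.image_subset_compact_of_bounded (𝕜₁ := ℝ)
      (Metric.isBounded_closedBall (x := (0:H)) (r := 1))
    exact (hK.totallyBounded).subset (by simpa using hKsub)
  obtain ⟨t, hts, htf, hcov⟩ := totallyBounded_iff_subset.mp htb2 _ (dist_mem_uniformity hδ)
  -- choose preimage points for the centers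
  set g : H → H := fun y =>
    if h : ∃ x ∈ closedBall (0:H) 1, S (S x) = y then h.choose else 0 with hgdef
  have hg : ∀ y ∈ t, g y ∈ closedBall (0:H) 1 ∧ S (S (g y)) = y := by
    intro y hy
    obtain ⟨x, hx, hxy⟩ := hts hy
    have h : ∃ x ∈ closedBall (0:H) 1, S (S x) = y := ⟨x, hx, hxy⟩
    rw [hgdef]; simp only [dif_pos h]
    exact ⟨h.choose_spec.1, h.choose_spec.2⟩
  refine ⟨(fun y => S (g y)) '' t, htf.image _, ?_⟩
  rintro z ⟨x, hx, rfl⟩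
  have := hcov (mem_image_of_mem (fun x => S (S x)) hx)
  rw [mem_iUnion₂] at this
  obtain ⟨y, hy, hdist⟩ := this
  have hdist' : ‖S (S x) - S (S (g y))‖ < δ := by
    rw [(hg y hy).2, ← dist_eq_norm]; exact hdist
  have hxgy : ‖x - g y‖ ≤ 2 := by
    have h1 : ‖x‖ ≤ 1 := mem_closedBall_zero_iff.mp hx
    have h2 : ‖g y‖ ≤ 1 := mem_closedBall_zero_iff.mp (hg y hy).1
    calc ‖x - g y‖ ≤ ‖x‖ + ‖g y‖ := norm_sub_le _ _
    _ ≤ 2 := by linarith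
  have hsq : ‖S x - S (g y)‖ ^ 2 < ε ^ 2 := by
    have h1 := key x (g y)
    have h2 : ‖S (S x) - S (S (g y))‖ * ‖x - g y‖ ≤ δ * 2 := by
      apply mul_le_mul hdist'.le hxgy (norm_nonneg _) hδ.le
    have : δ * 2 < ε ^ 2 := by rw [hδdef]; nlinarith
    linarith
  have hlt : ‖S x - S (g y)‖ < ε := by
    have := lt_of_pow_lt_pow_left₀ 2 hε.le hsq
    exact this
  rw [mem_iUnion₂]
  exact ⟨S (g y), mem_image_of_mem _ hy, by rwa [mem_ball, dist_eq_norm]⟩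

/-- A nonzero compact symmetric operator has an eigenvector. -/
theorem aux_exists_eigen [CompleteSpace H] {T : H →L[ℝ] H}
    (hsym : ∀ x y : H, ⟪T x, y⟫ = ⟪x, T y⟫)
    (hcomp : IsCompactOperator (⇑T)) (hT : T ≠ 0) :
    ∃ (c : ℝ) (x : H), x ≠ 0 ∧ T x = c • x := by
  set M : ℝ := ‖T‖ with hMdef
  have hM : 0 < M := norm_pos_iff.mpr hT
  -- a maximizing sequence
  have hseq : ∀ n : ℕ, ∃ x : H, ‖x‖ ≤ 1 ∧ M * (1 - 1 / (n + 1)) < ‖T x‖ := by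
    intro n
    have hpos : (0:ℝ) < 1 / ((n:ℝ) + 1) := by positivity
    have h1 : M * (1 - 1 / ((n:ℝ) + 1)) < M := by nlinarith
    obtain ⟨x, hx1, hx2⟩ := T.exists_lt_apply_of_lt_opNorm h1
    exact ⟨x, hx1.le, hx2⟩
  choose x hx1 hx2 using hseq
  have hxM : ∀ n, ‖T (x n)‖ ≤ M := by
    intro n
    calc ‖T (x n)‖ ≤ ‖T‖ * ‖x n‖ := T.le_opNorm _
    _ ≤ M * 1 := by rw [← hMdef]; exact mul_le_mul_of_nonneg_left (hx1 n) hM.le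
    _ = M := mul_one M
  have hTx : Tendsto (fun n => ‖T (x n)‖) atTop (𝓝 M) := by
    apply tendsto_of_tendsto_of_tendsto_of_le_of_le
      (g := fun n : ℕ => M * (1 - 1 / ((n:ℝ) + 1))) (h := fun _ : ℕ => M)
    · have h0 : Tendsto (fun n : ℕ => 1 / ((n:ℝ) + 1)) atTop (𝓝 0) :=
        tendsto_one_div_add_atTop_nhds_zero_nat
      have h1 : Tendsto (fun n : ℕ => M * (1 - 1 / ((n:ℝ) + 1))) atTop (𝓝 (M * (1 - 0))) :=
        Tendsto.const_mul M (tendsto_const_nhds.sub h0)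
      simpa using h1
    · exact tendsto_const_nhds
    · exact fun n => (hx2 n).le
    · exact hxM
  -- compactness: extract a convergent subsequence of T (T (x n))
  have hcl : IsCompact (closure (⇑((T : H →ₗ[ℝ] H)) '' closedBall 0 M)) := by
    have hc : IsCompactOperator (⇑((T : H →ₗ[ℝ] H))) := by simpa using hcomp
    exact hc.isCompact_closure_image_of_bounded (𝕜₁ := ℝ) (Metric.isBounded_closedBall)
  have hmem : ∀ n, T (T (x n)) ∈ closure (⇑((T : H →ₗ[ℝ] H)) '' closedBall 0 M) := by
    intro n
    apply subset_closure
    exact ⟨T (x n), by simpa [mem_closedBall_zero_iff] using hxM n, rfl⟩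
  obtain ⟨y, -, ψ, hψ, hconv⟩ := hcl.tendsto_subseq hmem
  -- the defect goes to zero
  have key : ∀ n, ‖T (T (x n)) - M ^ 2 • x n‖ ^ 2 ≤ M ^ 4 - M ^ 2 * ‖T (x n)‖ ^ 2 := by
    intro n
    have e1 : ‖T (T (x n)) - M ^ 2 • x n‖ ^ 2
        = ‖T (T (x n))‖ ^ 2 - 2 * ⟪T (T (x n)), M ^ 2 • x n⟫ + ‖M ^ 2 • x n‖ ^ 2 :=
      norm_sub_sq_real _ _
    have e2 : ⟪T (T (x n)), M ^ 2 • x n⟫ = M ^ 2 * ‖T (x n)‖ ^ 2 := by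
      rw [real_inner_smul_right, hsym, real_inner_self_eq_norm_sq]
    have e3 : ‖T (T (x n))‖ ^ 2 ≤ M ^ 2 * ‖T (x n)‖ ^ 2 := by
      have := T.le_opNorm (T (x n))
      nlinarith [norm_nonneg (T (T (x n))), norm_nonneg (T (x n))]
    have e4 : ‖M ^ 2 • x n‖ ^ 2 ≤ M ^ 4 := by
      rw [norm_smul]
      have h5 : |M ^ 2| = M ^ 2 := abs_of_nonneg (by positivity)
      simp only [Real.norm_eq_abs, h5]
      have h6 : ‖x n‖ ^ 2 ≤ 1 := by nlinarith [hx1 n, norm_nonneg (x n)]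
      nlinarith [sq_nonneg (M ^ 2)]
    rw [e1, e2]
    linarith
  have hdef : Tendsto (fun n => T (T (x n)) - M ^ 2 • x n) atTop (𝓝 0) := by
    rw [tendsto_zero_iff_norm_tendsto_zero]
    have hsq : Tendsto (fun n => ‖T (T (x n)) - M ^ 2 • x n‖ ^ 2) atTop (𝓝 0) := by
      apply tendsto_of_tendsto_of_tendsto_of_le_of_le
        (g := fun _ : ℕ => (0:ℝ)) (h := fun n => M ^ 4 - M ^ 2 * ‖T (x n)‖ ^ 2)
      · exact tendsto_const_nhds
      · have := ((hTx.pow 2).const_mul (M ^ 2)).const_sub (M ^ 4)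
        have h0 : M ^ 4 - M ^ 2 * M ^ 2 = 0 := by ring
        rwa [h0] at this
      · exact fun n => sq_nonneg _
      · exact key
    have := (Real.continuous_sqrt.tendsto 0).comp hsq
    simpa [Function.comp_def, Real.sqrt_sq (norm_nonneg _)] using this
  -- limit along the subsequence
  have hM2 : (M:ℝ) ^ 2 ≠ 0 := by positivity
  obtain ⟨z, hzdef⟩ : ∃ z : H, z = (M ^ 2)⁻¹ • y := ⟨_, rfl⟩
  have hxz : Tendsto (fun n => x (ψ n)) atTop (𝓝 z) := by
    have h1 : Tendsto (fun n => M ^ 2 • x (ψ n)) atTop (𝓝 y) := by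
      have h2 := hconv.sub (hdef.comp hψ.tendsto_atTop)
      simpa using h2
    have h3 := h1.const_smul ((M ^ 2)⁻¹ : ℝ)
    rw [hzdef]
    simpa [smul_smul, inv_mul_cancel₀ hM2] using h3
  have hyz : y = M ^ 2 • z := by
    rw [hzdef, smul_smul, mul_inv_cancel₀ hM2, one_smul]
  have hTz : T (T z) = M ^ 2 • z := by
    have h1 : Tendsto (fun n => T (T (x (ψ n)))) atTop (𝓝 (T (T z))) :=
      ((T.continuous.comp T.continuous).tendsto z).comp hxz
    rw [← hyz]
    exact tendsto_nhds_unique h1 hconv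
  have hz0 : z ≠ 0 := by
    have h1 : Tendsto (fun n => ‖T (x (ψ n))‖) atTop (𝓝 ‖T z‖) :=
      (((T.continuous.tendsto z).comp hxz)).norm
    have h2 : Tendsto (fun n => ‖T (x (ψ n))‖) atTop (𝓝 M) := hTx.comp hψ.tendsto_atTop
    have h3 : ‖T z‖ = M := tendsto_nhds_unique h1 h2
    intro h
    rw [h] at h3
    simp at h3
    exact hM.ne' h3.symm
  -- split into the two eigenvalue cases
  by_cases hw : T z - M • z = 0
  · exact ⟨M, z, hz0, by rwa [sub_eq_zero] at hw⟩
  · refine ⟨-M, T z - M • z, hw, ?_⟩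
    have h1 : T (T z - M • z) = M ^ 2 • z - M • T z := by
      rw [map_sub, map_smul, hTz]
    rw [h1]
    module

/-- Restriction to an invariant closed subspace: eigenvector inside the subspace. -/
theorem aux_exists_eigen_orth [CompleteSpace H] {T : H →L[ℝ] H}
    (hsym : ∀ x y : H, ⟪T x, y⟫ = ⟪x, T y⟫) (hcomp : IsCompactOperator (⇑T))
    (hinj : ∀ x : H, T x = 0 → x = 0)
    {V : Submodule ℝ H} (hVc : IsClosed (V : Set H)) (hinv : ∀ x ∈ V, T x ∈ V)
    (hV : V ≠ ⊥) :
    ∃ v : H, v ∈ V ∧ v ≠ 0 ∧ ∃ c : ℝ, T v = c • v := by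
  haveI : CompleteSpace V := hVc.completeSpace_coe
  set T' : V →L[ℝ] V := (T.comp V.subtypeL).codRestrict V (fun x => hinv x x.2) with hT'
  have hT'app : ∀ x : V, (T' x : H) = T x := fun x => rfl
  have hsym' : ∀ x y : V, ⟪T' x, y⟫ = ⟪x, T' y⟫ := by
    intro x y
    rw [Submodule.coe_inner, Submodule.coe_inner, hT'app, hT'app]
    exact hsym x y
  have hcomp' : IsCompactOperator (⇑T') := by
    have h := (hcomp.comp_clm V.subtypeL).codRestrict (fun x : V => hinv x x.2) hVc
    exact h
  have hT'0 : T' ≠ 0 := by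
    intro h
    obtain ⟨v, hvV, hv0⟩ := Submodule.exists_mem_ne_zero_of_ne_bot hV
    apply hv0
    apply hinj
    have h1 : T' ⟨v, hvV⟩ = 0 := by rw [h]; rfl
    have h2 := congrArg (Subtype.val) h1
    simpa [hT'app] using h2
  obtain ⟨c, x, hx0, hx⟩ := aux_exists_eigen hsym' hcomp' hT'0
  refine ⟨x, x.2, ?_, c, ?_⟩
  · intro h
    exact hx0 (Subtype.ext h)
  · have := congrArg (Subtype.val) hx
    simpa [hT'app] using this

/-- An orthonormal set in a separable space is countable. -/
theorem aux_countable_orthonormal [TopologicalSpace.SeparableSpace H]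
    {w : Set H} (hw : Orthonormal ℝ (Subtype.val : w → H)) : w.Countable := by
  obtain ⟨D, hDc, hDd⟩ := TopologicalSpace.exists_countable_dense H
  have hsep : ∀ x : w, ∃ d : H, d ∈ D ∧ dist (x : H) d < 1 / 2 := by
    intro x
    obtain ⟨d, hd1, hd2⟩ := (Metric.dense_iff.mp hDd (x : H) (1/2) (by norm_num))
    exact ⟨d, hd2, by rwa [mem_ball, dist_comm] at hd1⟩
  choose f hf1 hf2 using hsep
  have hdist : ∀ x y : w, x ≠ y → (1:ℝ) ≤ dist (x : H) (y : H) := by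
    intro x y hxy
    have h1 : ‖(x:H) - (y:H)‖ ^ 2 = 2 := by
      rw [norm_sub_sq_real, hw.1 x, hw.1 y, hw.2 hxy]
      norm_num
    by_contra hlt
    push_neg at hlt
    rw [dist_eq_norm] at hlt
    nlinarith [norm_nonneg ((x:H) - (y:H))]
  have hinj : Function.Injective f := by
    intro x y hxy
    by_contra hne
    have h1 := hdist x y hne
    have h2 := hf2 x
    rw [hxy] at h2
    have h3 := hf2 y
    have h4 := dist_triangle (x : H) (f y) (y : H)
    have h5 := dist_comm (y : H) (f y)
    linarith
  rw [← Set.countable_coe_iff]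
  haveI : Countable D := hDc.to_subtype
  exact Function.Injective.countable (f := fun x : w => (⟨f x, hf1 x⟩ : D))
    (fun a b hab => hinj (congrArg Subtype.val hab))

/-- A compact symmetric injective operator forces separability. -/
theorem aux_separable [CompleteSpace H] {T : H →L[ℝ] H}
    (hsym : ∀ x y : H, ⟪T x, y⟫ = ⟪x, T y⟫)
    (hcomp : IsCompactOperator (⇑T)) (hinj : ∀ x : H, T x = 0 → x = 0) :
    TopologicalSpace.SeparableSpace H := by
  have hsep : TopologicalSpace.IsSeparable (Set.range (⇑T)) := by
    have hcover : Set.range (⇑T) = ⋃ n : ℕ, ⇑T '' (closedBall 0 n) := by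
      ext x
      simp only [Set.mem_range, Set.mem_iUnion, Set.mem_image]
      constructor
      · rintro ⟨y, rfl⟩
        obtain ⟨n, hn⟩ := exists_nat_ge ‖y‖
        exact ⟨n, y, by simpa [mem_closedBall_zero_iff] using hn, rfl⟩
      · rintro ⟨n, y, -, rfl⟩
        exact ⟨y, rfl⟩
    rw [hcover]
    apply TopologicalSpace.isSeparable_iUnion.mpr
    intro n
    have hK : IsCompact (closure (⇑((T : H →ₗ[ℝ] H)) '' closedBall 0 n)) := by
      have hc : IsCompactOperator (⇑((T : H →ₗ[ℝ] H))) := by simpa using hcomp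
      exact hc.isCompact_closure_image_of_bounded (𝕜₁ := ℝ) Metric.isBounded_closedBall
    exact (hK.isSeparable).mono (by exact subset_closure)
  have hdense : Dense (Set.range (⇑T)) := by
    have hbot : (LinearMap.range (T : H →ₗ[ℝ] H))ᗮ = ⊥ := by
      rw [Submodule.eq_bot_iff]
      intro x hx
      rw [Submodule.mem_orthogonal] at hx
      apply hinj
      rw [← inner_self_eq_zero (𝕜 := ℝ)]
      have h1 : T (T x) ∈ LinearMap.range (T : H →ₗ[ℝ] H) := ⟨T x, rfl⟩
      have h2 := hx _ h1
      rwa [hsym (T x) x] at h2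
    have htop : (LinearMap.range (T : H →ₗ[ℝ] H)).topologicalClosure = ⊤ :=
      Submodule.topologicalClosure_eq_top_iff.mpr hbot
    have h3 : (Set.range (⇑T)) = ((LinearMap.range (T : H →ₗ[ℝ] H) : Submodule ℝ H) : Set H) := by
      rw [LinearMap.coe_range]
      rfl
    rw [dense_iff_closure_eq, h3, ← Submodule.topologicalClosure_coe, htop]
    rfl
  have h4 := hsep.closure
  rw [hdense.closure_eq] at h4
  exact TopologicalSpace.isSeparable_univ_iff.mp h4

/-- insert a unit vector orthogonal to an orthonormal set. -/
theorem aux_orthonormal_insert {w : Set H} (hw : Orthonormal ℝ (Subtype.val : w → H))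
    {e : H} (he : ‖e‖ = 1) (horth : ∀ x ∈ w, ⟪e, x⟫ = 0) :
    Orthonormal ℝ (fun x : ↥(insert e w) => (x : H)) := by
  constructor
  · rintro ⟨a, ha'⟩
    rcases eq_or_mem_of_mem_insert ha' with ha | ha
    · simp [ha, he]
    · exact hw.1 ⟨a, ha⟩
  · rintro ⟨a, ha'⟩
    rcases eq_or_mem_of_mem_insert ha' with ha | ha
    · rintro ⟨b, hb'⟩ hab'
      have hb : b ∈ w := by
        refine mem_of_mem_insert_of_ne hb' ?_
        intro hbe'
        apply hab'
        simp [ha, hbe']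
      simpa [ha] using horth b hb
    · rintro ⟨b, hb'⟩ hab'
      rcases eq_or_mem_of_mem_insert hb' with hb | hb
      · rw [real_inner_comm]
        simpa [hb] using horth a ha
      · have : (⟨a, ha⟩ : w) ≠ ⟨b, hb⟩ := by
          intro hab''
          apply hab'
          simpa using hab''
        exact hw.2 this

theorem aux_nnhalves (t : ℝ≥0) : t / 2 + t / 2 = t := by
  rw [← NNReal.coe_inj]
  push_cast
  ring

section Semigroup

variable {P : ℝ≥0 → H →L[ℝ] H}
  (hP0 : P 0 = ContinuousLinearMap.id ℝ H)
  (hPadd : ∀ s t : ℝ≥0, P (s + t) = (P s).comp (P t))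
  (hsym : ∀ (t : ℝ≥0) (x y : H), ⟪P t x, y⟫ = ⟪x, P t y⟫)
  (hcont : ∀ x : H, Continuous fun t : ℝ≥0 => P t x)

include hPadd in
theorem aux_sq (t : ℝ≥0) (x : H) : P t x = P (t / 2) (P (t / 2) x) := by
  conv_lhs => rw [← aux_nnhalves t, hPadd]
  rfl

include hPadd hsym in
theorem aux_pos (t : ℝ≥0) (x : H) : 0 ≤ ⟪P t x, x⟫ := by
  rw [aux_sq hPadd, hsym (t / 2) (P (t / 2) x) x]
  exact real_inner_self_nonneg

include hPadd hsym in
theorem aux_halfzero (t : ℝ≥0) (x : H) (hx : P t x = 0) : P (t / 2) x = 0 := by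
  have h1 : ⟪P (t / 2) x, P (t / 2) x⟫ = 0 := by
    rw [← hsym (t / 2) (P (t / 2) x) x, ← aux_sq hPadd, hx, inner_zero_left]
  exact inner_self_eq_zero.mp h1

include hP0 hPadd hsym hcont in
theorem aux_inj (t : ℝ≥0) (x : H) (hx : P t x = 0) : x = 0 := by
  have hstep : ∀ n : ℕ, P (t / 2 ^ n) x = 0 := by
    intro n
    induction n with
    | zero => simpa using hx
    | succ n ih =>
      have := aux_halfzero hPadd hsym (t / 2 ^ n) x ih
      rwa [div_div, ← pow_succ] at this
  have htend : Tendsto (fun n : ℕ => t / 2 ^ n) atTop (𝓝 0) := by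
    rw [← NNReal.tendsto_coe]
    have h1 : Tendsto (fun n : ℕ => ((t:ℝ) * (1 / 2) ^ n)) atTop (𝓝 ((t:ℝ) * 0)) := by
      exact Tendsto.const_mul _ (tendsto_pow_atTop_nhds_zero_of_lt_one (by norm_num) (by norm_num))
    have h2 : ∀ n : ℕ, ((t / 2 ^ n : ℝ≥0) : ℝ) = (t:ℝ) * (1 / 2) ^ n := by
      intro n
      push_cast
      rw [div_eq_mul_inv, ← inv_pow]
      norm_num
    simpa [h2] using h1
  have h3 : Tendsto (fun n : ℕ => P (t / 2 ^ n) x) atTop (𝓝 (P 0 x)) :=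
    (((hcont x).tendsto 0).comp htend)
  have h4 : P 0 x = 0 := by
    apply tendsto_nhds_unique h3
    simpa [hstep] using (tendsto_const_nhds : Tendsto (fun _ : ℕ => (0:H)) atTop (𝓝 0))
  rwa [hP0] at h4

include hPadd hsym in
theorem aux_half_eigen (t : ℝ≥0) (x : H) {μ : ℝ} (hμ : 0 < μ) (hx : P t x = μ • x) :
    P (t / 2) x = Real.sqrt μ • x := by
  set s : ℝ := Real.sqrt μ with hsdef
  have hs : 0 < s := Real.sqrt_pos.mpr hμ
  have hs2 : s * s = μ := Real.mul_self_sqrt hμ.le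
  have hw : P (t / 2) (P (t / 2) x - s • x) = -s • (P (t / 2) x - s • x) := by
    have h1 : P (t / 2) (P (t / 2) x) = μ • x := by rw [← aux_sq hPadd, hx]
    rw [map_sub, map_smul, h1, ← hs2]
    module
  have h0 : 0 ≤ ⟪P (t / 2) (P (t / 2) x - s • x), P (t / 2) x - s • x⟫ :=
    aux_pos hPadd hsym _ _
  rw [hw, real_inner_smul_left] at h0
  have h5 : ⟪P (t / 2) x - s • x, P (t / 2) x - s • x⟫ ≤ 0 := by nlinarith
  have h6 : P (t / 2) x - s • x = 0 := real_inner_self_nonpos.mp h5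
  rw [sub_eq_zero] at h6
  exact h6

include hP0 hPadd hsym hcont in
theorem aux_prop {t₀ : ℝ≥0} (ht₀ : 0 < t₀) (φ : H) {μ : ℝ} (hμ : 0 < μ)
    (heig : P t₀ φ = μ • φ) (t : ℝ≥0) :
    P t φ = Real.exp ((Real.log μ / (t₀:ℝ)) * (t:ℝ)) • φ := by
  set c : ℝ := Real.log μ / (t₀:ℝ) with hcdef
  have ht₀R : (0:ℝ) < (t₀:ℝ) := ht₀
  set A : ℝ≥0 → Prop := fun u => P u φ = Real.exp (c * (u:ℝ)) • φ with hAdef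
  have hA0 : A 0 := by simp [hAdef, hP0]
  have hAt₀ : A t₀ := by
    have h1 : c * (t₀:ℝ) = Real.log μ := div_mul_cancel₀ _ ht₀R.ne'
    simp only [hAdef, h1, Real.exp_log hμ]
    exact heig
  have hAadd : ∀ u v : ℝ≥0, A u → A v → A (u + v) := by
    intro u v hu hv
    simp only [hAdef] at hu hv ⊢
    rw [hPadd]
    show P u (P v φ) = _
    rw [hv, map_smul, hu, smul_smul, ← Real.exp_add, NNReal.coe_add]
    ring_nf
  have hAhalf : ∀ u : ℝ≥0, A u → A (u / 2) := by
    intro u hu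
    simp only [hAdef] at hu ⊢
    have h1 := aux_half_eigen hPadd hsym u φ (Real.exp_pos _) hu
    have h2 : Real.sqrt (Real.exp (c * (u:ℝ))) = Real.exp (c * ((u / 2 : ℝ≥0) : ℝ)) := by
      have h3 : Real.exp (c * (u:ℝ)) =
          Real.exp (c * (u:ℝ) / 2) * Real.exp (c * (u:ℝ) / 2) := by
        rw [← Real.exp_add, add_halves]
      rw [h3, Real.sqrt_mul_self (Real.exp_pos _).le]
      congr 1
      push_cast
      ring
    rw [h1, h2]
  have hApow : ∀ n : ℕ, A (t₀ / 2 ^ n) := by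
    intro n
    induction n with
    | zero => simpa using hAt₀
    | succ n ih =>
      have := hAhalf _ ih
      rwa [div_div, ← pow_succ] at this
  have hAdyadic : ∀ (n k : ℕ), A ((k : ℝ≥0) * (t₀ / 2 ^ n)) := by
    intro n k
    induction k with
    | zero => simpa using hA0
    | succ k ih =>
      have h1 : ((k + 1 : ℕ) : ℝ≥0) * (t₀ / 2 ^ n)
          = (k : ℝ≥0) * (t₀ / 2 ^ n) + t₀ / 2 ^ n := by
        push_cast
        ring
      rw [h1]
      exact hAadd _ _ ih (hApow n)
  -- approximate t by dyadics
  set q : ℕ → ℝ≥0 := fun n => ((⌊(t:ℝ) * 2 ^ n / (t₀:ℝ)⌋₊ : ℝ≥0)) * (t₀ / 2 ^ n) with hqdef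
  have hqA : ∀ n, A (q n) := fun n => hAdyadic n _
  have hqreal : Tendsto (fun n => ((q n : ℝ≥0) : ℝ)) atTop (𝓝 (t:ℝ)) := by
    have h2n : ∀ n : ℕ, (0:ℝ) < 2 ^ n := fun n => by positivity
    have hlow : ∀ n : ℕ, (t:ℝ) - (t₀:ℝ) / 2 ^ n ≤ (q n : ℝ) := by
      intro n
      have h1 : (t:ℝ) * 2 ^ n / (t₀:ℝ) < ⌊(t:ℝ) * 2 ^ n / (t₀:ℝ)⌋₊ + 1 :=
        Nat.lt_floor_add_one _
      have h2 : ((q n : ℝ≥0) : ℝ) = (⌊(t:ℝ) * 2 ^ n / (t₀:ℝ)⌋₊ : ℝ) * ((t₀:ℝ) / 2 ^ n) := by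
        rw [hqdef]; push_cast; ring
      rw [h2, sub_le_iff_le_add]
      set d : ℝ := (t₀:ℝ) / 2 ^ n with hddef
      have hd : d * 2 ^ n = (t₀:ℝ) := div_mul_cancel₀ _ (h2n n).ne'
      rw [div_lt_iff₀ ht₀R] at h1
      have h1' : (t:ℝ) * 2 ^ n < ((⌊(t:ℝ) * 2 ^ n / (t₀:ℝ)⌋₊ : ℝ) + 1) * d * 2 ^ n := by
        rw [mul_assoc, hd]
        exact h1
      have h9 := lt_of_mul_lt_mul_right h1' (h2n n).le
      linarith
    have hhigh : ∀ n : ℕ, ((q n : ℝ≥0) : ℝ) ≤ (t:ℝ) := by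
      intro n
      have h1 : (⌊(t:ℝ) * 2 ^ n / (t₀:ℝ)⌋₊ : ℝ) ≤ (t:ℝ) * 2 ^ n / (t₀:ℝ) :=
        Nat.floor_le (by positivity)
      have h2 : ((q n : ℝ≥0) : ℝ) = (⌊(t:ℝ) * 2 ^ n / (t₀:ℝ)⌋₊ : ℝ) * ((t₀:ℝ) / 2 ^ n) := by
        rw [hqdef]; push_cast; ring
      rw [h2]
      set d : ℝ := (t₀:ℝ) / 2 ^ n with hddef
      have hd : d * 2 ^ n = (t₀:ℝ) := div_mul_cancel₀ _ (h2n n).ne'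
      rw [le_div_iff₀ ht₀R] at h1
      apply le_of_mul_le_mul_right _ (h2n n)
      rw [mul_assoc, hd]
      exact h1
    apply tendsto_of_tendsto_of_tendsto_of_le_of_le (g := fun n : ℕ => (t:ℝ) - (t₀:ℝ) / 2 ^ n)
      (h := fun _ : ℕ => (t:ℝ)) _ tendsto_const_nhds hlow hhigh
    have h4 : Tendsto (fun n : ℕ => (t₀:ℝ) / 2 ^ n) atTop (𝓝 0) := by
      have h5 : Tendsto (fun n : ℕ => ((t₀:ℝ) * (1 / 2) ^ n)) atTop (𝓝 ((t₀:ℝ) * 0)) :=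
        Tendsto.const_mul _ (tendsto_pow_atTop_nhds_zero_of_lt_one (by norm_num) (by norm_num))
      have h6 : ∀ n : ℕ, (t₀:ℝ) / 2 ^ n = (t₀:ℝ) * (1 / 2) ^ n := by
        intro n
        rw [div_eq_mul_inv, ← inv_pow]
        norm_num
      simpa [h6] using h5
    have := tendsto_const_nhds.sub h4 (f := fun _ : ℕ => (t:ℝ))
    simpa using this
  have hq : Tendsto q atTop (𝓝 t) := NNReal.tendsto_coe.mp hqreal
  -- conclude by continuity
  have hleft : Tendsto (fun n => P (q n) φ) atTop (𝓝 (P t φ)) :=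
    ((hcont φ).tendsto t).comp hq
  have hright : Tendsto (fun n => P (q n) φ) atTop (𝓝 (Real.exp (c * (t:ℝ)) • φ)) := by
    have h1 : Tendsto (fun n => Real.exp (c * ((q n : ℝ≥0) : ℝ))) atTop
        (𝓝 (Real.exp (c * (t:ℝ)))) :=
      (Real.continuous_exp.tendsto _).comp (hqreal.const_mul c)
    have h2 := h1.smul_const φ
    have h3 : (fun n => P (q n) φ) = fun n => Real.exp (c * ((q n : ℝ≥0) : ℝ)) • φ := by
      funext n
      exact hqA n
    rw [h3]
    exact h2
  exact tendsto_nhds_unique hleft hright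

end Semigroup

end Aux

/-- **Theorem 2.1 (main direction).** If `(P_t)_{t ≥ 0}` is a strongly continuous semigroup of
self-adjoint continuous linear operators on a real Hilbert space `H` and `P_{t₀}` is compact for
some `t₀ > 0`, then `P_t` is compact for all `t > 0` and there is a Hilbert basis of joint
eigenvectors with eigenvalues `exp (-λ_i t)`. -/
theorem stmt0 {H : Type*} [NormedAddCommGroup H] [InnerProductSpace ℝ H] [CompleteSpace H]
    (P : ℝ≥0 → H →L[ℝ] H)
    (hP0 : P 0 = ContinuousLinearMap.id ℝ H)
    (hPadd : ∀ s t : ℝ≥0, P (s + t) = (P s).comp (P t))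
    (hsym : ∀ (t : ℝ≥0) (x y : H), ⟪P t x, y⟫ = ⟪x, P t y⟫)
    (hcont : ∀ x : H, Continuous fun t : ℝ≥0 => P t x)
    (t₀ : ℝ≥0) (ht₀ : 0 < t₀) (hcomp : IsCompactOperator (P t₀)) :
    (∀ t : ℝ≥0, 0 < t → IsCompactOperator (P t)) ∧
      ∃ (ι : Type) (φ : HilbertBasis ι ℝ H) (lam : ι → ℝ),
        ∀ (i : ι) (t : ℝ≥0), P t (φ i) = Real.exp (-(lam i) * (t : ℝ)) • φ i := by
  classical
  have hinj : ∀ (t : ℝ≥0) (x : H), P t x = 0 → x = 0 := aux_inj hP0 hPadd hsym hcont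
  -- Part 1 : compactness for all positive times
  have hcompAll : ∀ t : ℝ≥0, 0 < t → IsCompactOperator (⇑(P t)) := by
    have hhalf : ∀ s : ℝ≥0, IsCompactOperator (⇑(P (2 * s))) → IsCompactOperator (⇑(P s)) := by
      intro s h
      apply aux_compact_of_sq (hsym s)
      have h1 : P (2 * s) = (P s).comp (P s) := by rw [two_mul]; exact hPadd s s
      rw [h1] at h
      exact h
    have hdown : ∀ (k : ℕ) (s : ℝ≥0),
        IsCompactOperator (⇑(P (2 ^ k * s))) → IsCompactOperator (⇑(P s)) := by
      intro k
      induction k with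
      | zero => intro s h; simpa using h
      | succ k ih =>
        intro s h
        apply hhalf
        apply ih (2 * s)
        have h2 : (2:ℝ≥0) ^ (k+1) * s = 2 ^ k * (2 * s) := by ring
        rwa [h2] at h
    intro t ht
    obtain ⟨n, hn⟩ : ∃ n : ℕ, t₀ ≤ 2 ^ n * t := by
      obtain ⟨n, hn⟩ := pow_unbounded_of_one_lt (t₀ / t) (one_lt_two (α := ℝ≥0))
      refine ⟨n, ?_⟩
      rw [div_lt_iff₀ ht] at hn
      exact hn.le
    apply hdown n t
    have h2 : 2 ^ n * t = t₀ + (2 ^ n * t - t₀) := (add_tsub_cancel_of_le hn).symm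
    rw [h2, hPadd]
    exact hcomp.comp_clm (P _)
  refine ⟨hcompAll, ?_⟩
  -- Part 2 : the Hilbert basis of joint eigenvectors
  have hTsym := hsym t₀
  have hTinj := hinj t₀
  haveI hHsep : TopologicalSpace.SeparableSpace H := aux_separable hTsym hcomp hTinj
  have heigpos : ∀ (x : H) (c : ℝ), x ≠ 0 → P t₀ x = c • x → 0 < c := by
    intro x c hx hc
    have h1 : 0 ≤ ⟪P t₀ x, x⟫ := aux_pos hPadd hsym t₀ x
    rw [hc, real_inner_smul_left] at h1
    have hxx : (0:ℝ) < ⟪x, x⟫ := by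
      have h9 : 0 < ‖x‖ := norm_pos_iff.mpr hx
      rw [real_inner_self_eq_norm_sq]
      nlinarith
    rcases lt_trichotomy c 0 with h | h | h
    · nlinarith
    · exfalso
      exact hx (hTinj x (by rw [hc, h, zero_smul]))
    · exact h
  -- Zorn's lemma : a maximal orthonormal set of eigenvectors
  obtain ⟨w, -, hwmax⟩ := zorn_subset_nonempty
      {s : Set H | Orthonormal ℝ (Subtype.val : s → H) ∧ ∀ x ∈ s, ∃ c : ℝ, P t₀ x = c • x}
      (fun c hc cc _c0 =>
        ⟨⋃₀ c, ⟨orthonormal_sUnion_of_directed cc.directedOn fun x xc => (hc xc).1,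
          fun x ⟨s, hs, hxs⟩ => (hc hs).2 x hxs⟩,
          fun s hs => subset_sUnion_of_mem hs⟩)
      ∅ ⟨orthonormal_empty ℝ H, by simp⟩
  have hwon : Orthonormal ℝ (Subtype.val : w → H) := hwmax.prop.1
  have hweig : ∀ x ∈ w, ∃ c : ℝ, P t₀ x = c • x := hwmax.prop.2
  have hVclosed : IsClosed (((span ℝ w)ᗮ : Submodule ℝ H) : Set H) :=
    Submodule.isClosed_orthogonal _
  have hinvV : ∀ x ∈ (span ℝ w)ᗮ, P t₀ x ∈ (span ℝ w)ᗮ := by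
    intro x hx
    rw [Submodule.mem_orthogonal]
    intro u hu
    have hle : span ℝ w ≤ LinearMap.ker ((innerSL ℝ (P t₀ x) : H →ₗ[ℝ] ℝ)) := by
      rw [span_le]
      intro a ha
      simp only [SetLike.mem_coe, LinearMap.mem_ker, ContinuousLinearMap.coe_coe, innerSL_apply_apply]
      obtain ⟨c, hc⟩ := hweig a ha
      have hxa : ⟪x, a⟫ = 0 := by
        rw [real_inner_comm]
        exact (Submodule.mem_orthogonal _ x).mp hx a (subset_span ha)
      rw [hTsym x a, hc, real_inner_smul_right, hxa, mul_zero]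
    have h3 := hle hu
    rw [LinearMap.mem_ker] at h3
    rw [real_inner_comm]
    simpa using h3
  have hVbot : (span ℝ w)ᗮ = ⊥ := by
    by_contra hVne
    obtain ⟨v, hvV, hv0, c, hvc⟩ :=
      aux_exists_eigen_orth hTsym hcomp hTinj hVclosed hinvV hVne
    set e : H := (‖v‖⁻¹ : ℝ) • v with hedef
    have he1 : ‖e‖ = 1 := norm_smul_inv_norm hv0
    have heV : e ∈ (span ℝ w)ᗮ := Submodule.smul_mem _ _ hvV
    have heeig : P t₀ e = c • e := by
      rw [hedef, map_smul, hvc, smul_comm]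
    have horth : ∀ x ∈ w, ⟪e, x⟫ = 0 := by
      intro x hx
      exact (Submodule.mem_orthogonal' _ e).mp heV x (subset_span hx)
    have hew : e ∉ w := by
      intro hew
      have h1 : ⟪e, e⟫ = (0:ℝ) := horth e hew
      rw [real_inner_self_eq_norm_mul_norm, he1] at h1
      norm_num at h1
    have hmax : insert e w = w := by
      apply hwmax.eq_of_ge (y := insert e w) ?_ (subset_insert e w)
      constructor
      · exact aux_orthonormal_insert hwon he1 horth
      · intro x hx
        rcases eq_or_mem_of_mem_insert hx with h | h
        · exact ⟨c, by rw [h]; exact heeig⟩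
        · exact hweig x h
    exact hew (hmax ▸ mem_insert e w)
  -- countability, reindexing and the basis
  have hwc : w.Countable := aux_countable_orthonormal hwon
  haveI : Countable ↥w := hwc.to_subtype
  obtain ⟨f, hf⟩ := exists_injective_nat ↥w
  set eqv : ↥w ≃ ↥(Set.range f) := Equiv.ofInjective f hf with heqv
  set v : ↥(Set.range f) → H := fun i => ((eqv.symm i : ↥w) : H) with hvdef
  have hvon : Orthonormal ℝ v := hwon.comp eqv.symm eqv.symm.injective
  have hvrange : Set.range v = w := by
    ext x
    constructor
    · rintro ⟨i, rfl⟩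
      exact (eqv.symm i).2
    · intro hx
      exact ⟨eqv ⟨x, hx⟩, by rw [hvdef]; simp⟩
  have hvspan : (span ℝ (Set.range v))ᗮ = ⊥ := by rw [hvrange]; exact hVbot
  refine ⟨↥(Set.range f), HilbertBasis.mkOfOrthogonalEqBot hvon hvspan, ?_⟩
  have heig : ∀ i, ∃ c : ℝ, P t₀ (v i) = c • v i := fun i => hweig _ (eqv.symm i).2
  choose μ hμ using heig
  have hμpos : ∀ i, 0 < μ i := fun i => heigpos _ _ (hvon.ne_zero i) (hμ i)
  refine ⟨fun i => -(Real.log (μ i)) / (t₀:ℝ), ?_⟩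
  intro i t
  have h1 : ⇑(HilbertBasis.mkOfOrthogonalEqBot hvon hvspan) = v :=
    HilbertBasis.coe_mkOfOrthogonalEqBot _ _
  rw [h1]
  rw [aux_prop hP0 hPadd hsym hcont ht₀ (v i) (hμpos i) (hμ i) t]
  congr 1
  ring
end

section
/- Let (U, 𝒜, μ) be a finite measure space and let (P_t)_{t≥0} be a strongly continuous semigroup of self-adjoint continuous linear operators on the real Hilbert space L²(μ). Suppose there exist t₀ > 0, a constant C ≥ 0, and a measurable function k : U × U → ℝ with |k(x,y)| ≤ C for (μ⊗μ)-a.e. (x,y), such that for every f ∈ L²(μ) one has (P_{t₀} f)(x) = ∫ k(x,y) f(y) dμ(y) for μ-a.e. x. Then P_t is a compact operator for every t > 0. -/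
set_option synthInstance.maxHeartbeats 1000000
set_option maxHeartbeats 1000000


open MeasureTheory
open scoped RealInnerProductSpace NNReal ENNReal


section KernelOp

variable {U : Type*} [MeasurableSpace U] (μ : Measure U) [IsFiniteMeasure μ]

noncomputable def opFun (κ : U × U → ℝ) (f : U → ℝ) : U → ℝ :=
  fun x => ∫ y, κ (x, y) * f y ∂μ

lemma opFun_congr_left {κ κ' : U × U → ℝ} (h : κ =ᵐ[μ.prod μ] κ') (f : U → ℝ) :
    opFun μ κ f =ᵐ[μ] opFun μ κ' f := by
  filter_upwards [Measure.ae_ae_of_ae_prod h] with x hx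
  exact integral_congr_ae (hx.mono fun y hy => by dsimp only; rw [hy])

lemma opFun_congr_right (κ : U × U → ℝ) {f f' : U → ℝ} (h : f =ᵐ[μ] f') :
    opFun μ κ f = opFun μ κ f' := by
  funext x
  exact integral_congr_ae (h.mono fun y hy => by dsimp only; rw [hy])

lemma aestronglyMeasurable_opFun {κ : U × U → ℝ} (hκ : AEStronglyMeasurable κ (μ.prod μ))
    {f : U → ℝ} (hf : AEStronglyMeasurable f μ) :
    AEStronglyMeasurable (opFun μ κ f) μ := by
  have : AEStronglyMeasurable (fun z : U × U => κ z * f z.2) (μ.prod μ) :=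
    hκ.mul (hf.comp_quasiMeasurePreserving Measure.quasiMeasurePreserving_snd)
  exact this.integral_prod_right'

lemma eLpNorm_two_eq {α : Type*} [MeasurableSpace α] (ν : Measure α) (g : α → ℝ) :
    eLpNorm g 2 ν = (∫⁻ x, (‖g x‖₊ : ℝ≥0∞) ^ (2 : ℝ) ∂ν) ^ (1 / (2 : ℝ)) := by
  rw [eLpNorm_eq_lintegral_rpow_enorm_toReal (by norm_num) (by norm_num)]
  norm_num [enorm_eq_nnnorm]

lemma eLpNorm_opFun_le_meas {κ : U × U → ℝ} (hκ : Measurable κ)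
    {f : U → ℝ} (hf : Measurable f) :
    eLpNorm (opFun μ κ f) 2 μ ≤ eLpNorm κ 2 (μ.prod μ) * eLpNorm f 2 μ := by
  have h22 : Real.HolderConjugate 2 2 := Real.HolderConjugate.two_two
  set B : ℝ≥0∞ := ∫⁻ y, (‖f y‖₊ : ℝ≥0∞) ^ (2 : ℝ) ∂μ with hB
  set F : U → ℝ≥0∞ := fun x => ∫⁻ y, (‖κ (x, y)‖₊ : ℝ≥0∞) ^ (2 : ℝ) ∂μ with hF
  have hFmeas : Measurable F := by
    rw [hF]
    exact Measurable.lintegral_prod_right' ((hκ.nnnorm.coe_nnreal_ennreal).pow_const _)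
  have key : ∀ x, (‖opFun μ κ f x‖₊ : ℝ≥0∞) ^ (2 : ℝ) ≤ F x * B := by
    intro x
    have h1 : (‖opFun μ κ f x‖₊ : ℝ≥0∞) ≤ ∫⁻ y, (‖κ (x, y)‖₊ : ℝ≥0∞) * ‖f y‖₊ ∂μ := by
      refine (enorm_integral_le_lintegral_enorm _).trans_eq ?_
      refine lintegral_congr fun y => ?_
      rw [enorm_mul]; rfl
    have h2 : (∫⁻ y, (‖κ (x, y)‖₊ : ℝ≥0∞) * ‖f y‖₊ ∂μ) ≤ (F x) ^ (1 / (2:ℝ)) * B ^ (1 / (2:ℝ)) := by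
      refine ENNReal.lintegral_mul_le_Lp_mul_Lq μ h22 ?_ ?_
      · exact ((hκ.comp measurable_prodMk_left).nnnorm.coe_nnreal_ennreal).aemeasurable
      · exact (hf.nnnorm.coe_nnreal_ennreal).aemeasurable
    calc (‖opFun μ κ f x‖₊ : ℝ≥0∞) ^ (2 : ℝ)
        ≤ ((F x) ^ (1 / (2:ℝ)) * B ^ (1 / (2:ℝ))) ^ (2 : ℝ) :=
          ENNReal.rpow_le_rpow (h1.trans h2) (by norm_num)
      _ = F x * B := by
          rw [ENNReal.mul_rpow_of_nonneg _ _ (by norm_num : (0:ℝ) ≤ 2),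
            ← ENNReal.rpow_mul, ← ENNReal.rpow_mul]
          norm_num
  have hprod : (∫⁻ x, F x ∂μ) = ∫⁻ z, (‖κ z‖₊ : ℝ≥0∞) ^ (2 : ℝ) ∂(μ.prod μ) := by
    rw [MeasureTheory.lintegral_prod _ ((hκ.nnnorm.coe_nnreal_ennreal).pow_const _).aemeasurable]
  calc eLpNorm (opFun μ κ f) 2 μ
      = (∫⁻ x, (‖opFun μ κ f x‖₊ : ℝ≥0∞) ^ (2 : ℝ) ∂μ) ^ (1 / (2:ℝ)) := eLpNorm_two_eq μ _
    _ ≤ (∫⁻ x, F x * B ∂μ) ^ (1 / (2:ℝ)) :=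
        ENNReal.rpow_le_rpow (lintegral_mono key) (by norm_num)
    _ = ((∫⁻ x, F x ∂μ) * B) ^ (1 / (2:ℝ)) := by rw [lintegral_mul_const _ hFmeas]
    _ = (∫⁻ x, F x ∂μ) ^ (1 / (2:ℝ)) * B ^ (1 / (2:ℝ)) :=
        ENNReal.mul_rpow_of_nonneg _ _ (by norm_num)
    _ = eLpNorm κ 2 (μ.prod μ) * eLpNorm f 2 μ := by
        rw [hprod, ← eLpNorm_two_eq, ← eLpNorm_two_eq]

lemma eLpNorm_opFun_le {κ : U × U → ℝ} (hκ : AEStronglyMeasurable κ (μ.prod μ))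
    {f : U → ℝ} (hf : AEStronglyMeasurable f μ) :
    eLpNorm (opFun μ κ f) 2 μ ≤ eLpNorm κ 2 (μ.prod μ) * eLpNorm f 2 μ := by
  have e1 : opFun μ κ f =ᵐ[μ] opFun μ (hκ.mk κ) (hf.mk f) := by
    refine (opFun_congr_left μ hκ.ae_eq_mk f).trans ?_
    rw [opFun_congr_right μ (hκ.mk κ) hf.ae_eq_mk]
  rw [eLpNorm_congr_ae e1, eLpNorm_congr_ae hκ.ae_eq_mk, eLpNorm_congr_ae hf.ae_eq_mk]
  exact eLpNorm_opFun_le_meas μ hκ.stronglyMeasurable_mk.measurable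
    hf.stronglyMeasurable_mk.measurable

end KernelOp
section CLM
variable {U : Type*} [MeasurableSpace U] (μ : Measure U) [IsFiniteMeasure μ]

lemma memℒp_opFun (κ : Lp ℝ 2 (μ.prod μ)) (f : Lp ℝ 2 μ) :
    MemLp (opFun μ κ f) 2 μ := by
  refine ⟨aestronglyMeasurable_opFun μ (Lp.aestronglyMeasurable κ) (Lp.aestronglyMeasurable f), ?_⟩
  refine lt_of_le_of_lt
    (eLpNorm_opFun_le μ (Lp.aestronglyMeasurable κ) (Lp.aestronglyMeasurable f)) ?_
  exact ENNReal.mul_lt_top (Lp.eLpNorm_lt_top κ) (Lp.eLpNorm_lt_top f)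

lemma ae_memℒp_slice (κ : Lp ℝ 2 (μ.prod μ)) :
    ∀ᵐ x ∂μ, MemLp (fun y => (κ : U × U → ℝ) (x, y)) 2 μ := by
  have hκ := Lp.aestronglyMeasurable κ
  set κ' := hκ.mk _ with hκ'
  have hκ'm : Measurable κ' := hκ.stronglyMeasurable_mk.measurable
  have hfin : (∫⁻ x, ∫⁻ y, (‖κ' (x, y)‖₊ : ℝ≥0∞) ^ (2:ℝ) ∂μ ∂μ) < ∞ := by
    rw [← MeasureTheory.lintegral_prod _ ((hκ'm.nnnorm.coe_nnreal_ennreal).pow_const _).aemeasurable]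
    have h2 := Lp.eLpNorm_lt_top κ
    rw [eLpNorm_congr_ae hκ.ae_eq_mk, eLpNorm_two_eq] at h2
    exact (ENNReal.rpow_lt_top_iff_of_pos (by norm_num : (0:ℝ) < 1/2)).mp
      (by simpa using h2)
  have hslice : ∀ᵐ x ∂μ, (∫⁻ y, (‖κ' (x, y)‖₊ : ℝ≥0∞) ^ (2:ℝ) ∂μ) < ∞ :=
    ae_lt_top (Measurable.lintegral_prod_right' ((hκ'm.nnnorm.coe_nnreal_ennreal).pow_const _))
      hfin.ne
  filter_upwards [Measure.ae_ae_of_ae_prod hκ.ae_eq_mk, hslice] with x hx hx2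
  have hxe : (fun y => (κ : U × U → ℝ) (x, y)) =ᵐ[μ] (fun y => κ' (x, y)) := hx
  refine ⟨(hκ'm.comp measurable_prodMk_left).aestronglyMeasurable.congr hxe.symm, ?_⟩
  rw [eLpNorm_congr_ae hxe, eLpNorm_two_eq]
  exact ENNReal.rpow_lt_top_of_nonneg (by norm_num) hx2.ne

lemma ae_integrable_slice (κ : Lp ℝ 2 (μ.prod μ)) (f : Lp ℝ 2 μ) :
    ∀ᵐ x ∂μ, Integrable (fun y => (κ : U × U → ℝ) (x, y) * f y) μ := by
  filter_upwards [ae_memℒp_slice μ κ] with x hx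
  rw [← memLp_one_iff_integrable]
  have := (Lp.memLp f).smul hx (p := 2) (q := 2) (r := 1)
  simpa [smul_eq_mul, Pi.mul_def] using this

/-- The integral operator with kernel `κ`, applied to `f`, as an element of `L²`. -/
noncomputable def opLp (κ : Lp ℝ 2 (μ.prod μ)) (f : Lp ℝ 2 μ) : Lp ℝ 2 μ :=
  (memℒp_opFun μ κ f).toLp _

lemma opLp_coeFn (κ : Lp ℝ 2 (μ.prod μ)) (f : Lp ℝ 2 μ) :
    (opLp μ κ f : U → ℝ) =ᵐ[μ] opFun μ κ f := MemLp.coeFn_toLp _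

lemma opLp_norm (κ : Lp ℝ 2 (μ.prod μ)) (f : Lp ℝ 2 μ) :
    ‖opLp μ κ f‖ ≤ ‖κ‖ * ‖f‖ := by
  rw [opLp, Lp.norm_toLp, Lp.norm_def, Lp.norm_def, ← ENNReal.toReal_mul]
  refine ENNReal.toReal_mono ?_ ?_
  · exact (ENNReal.mul_lt_top (Lp.eLpNorm_lt_top κ) (Lp.eLpNorm_lt_top f)).ne
  · exact eLpNorm_opFun_le μ (Lp.aestronglyMeasurable κ) (Lp.aestronglyMeasurable f)

lemma opLp_add_right (κ : Lp ℝ 2 (μ.prod μ)) (f g : Lp ℝ 2 μ) :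
    opLp μ κ (f + g) = opLp μ κ f + opLp μ κ g := by
  refine Lp.ext ?_
  have hsum : opFun μ κ ((f + g : Lp ℝ 2 μ) : U → ℝ)
      =ᵐ[μ] opFun μ κ f + opFun μ κ g := by
    rw [opFun_congr_right μ _ (Lp.coeFn_add f g)]
    filter_upwards [ae_integrable_slice μ κ f, ae_integrable_slice μ κ g] with x h1 h2
    simp only [opFun, Pi.add_apply]
    rw [← integral_add h1 h2]
    exact integral_congr_ae (Filter.Eventually.of_forall fun y => by dsimp only; ring)
  calc (opLp μ κ (f + g) : U → ℝ) =ᵐ[μ] _ := opLp_coeFn μ κ (f + g)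
    _ =ᵐ[μ] opFun μ κ f + opFun μ κ g := hsum
    _ =ᵐ[μ] (opLp μ κ f : U → ℝ) + (opLp μ κ g : U → ℝ) :=
        ((opLp_coeFn μ κ f).symm.add (opLp_coeFn μ κ g).symm)
    _ =ᵐ[μ] ((opLp μ κ f + opLp μ κ g : Lp ℝ 2 μ) : U → ℝ) := (Lp.coeFn_add _ _).symm

lemma opLp_smul_right (κ : Lp ℝ 2 (μ.prod μ)) (c : ℝ) (f : Lp ℝ 2 μ) :
    opLp μ κ (c • f) = c • opLp μ κ f := by
  refine Lp.ext ?_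
  have hsm : opFun μ κ ((c • f : Lp ℝ 2 μ) : U → ℝ) =ᵐ[μ] c • opFun μ κ f := by
    rw [opFun_congr_right μ _ (Lp.coeFn_smul c f)]
    refine Filter.Eventually.of_forall fun x => ?_
    simp only [opFun, Pi.smul_apply, smul_eq_mul]
    rw [← integral_const_mul]
    exact integral_congr_ae (Filter.Eventually.of_forall fun y => by dsimp only; ring)
  calc (opLp μ κ (c • f) : U → ℝ) =ᵐ[μ] _ := opLp_coeFn μ κ (c • f)
    _ =ᵐ[μ] c • opFun μ κ f := hsm
    _ =ᵐ[μ] c • (opLp μ κ f : U → ℝ) := (opLp_coeFn μ κ f).symm.const_smul c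
    _ =ᵐ[μ] ((c • opLp μ κ f : Lp ℝ 2 μ) : U → ℝ) := (Lp.coeFn_smul _ _).symm

lemma opLp_add_left (κ₁ κ₂ : Lp ℝ 2 (μ.prod μ)) (f : Lp ℝ 2 μ) :
    opLp μ (κ₁ + κ₂) f = opLp μ κ₁ f + opLp μ κ₂ f := by
  refine Lp.ext ?_
  have hsum : opFun μ ((κ₁ + κ₂ : Lp ℝ 2 (μ.prod μ)) : U × U → ℝ) (f : U → ℝ)
      =ᵐ[μ] opFun μ κ₁ f + opFun μ κ₂ f := by
    refine (opFun_congr_left μ (Lp.coeFn_add κ₁ κ₂) _).trans ?_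
    filter_upwards [ae_integrable_slice μ κ₁ f, ae_integrable_slice μ κ₂ f] with x h1 h2
    simp only [opFun, Pi.add_apply]
    rw [← integral_add h1 h2]
    exact integral_congr_ae (Filter.Eventually.of_forall fun y => by dsimp only; ring)
  calc (opLp μ (κ₁ + κ₂) f : U → ℝ) =ᵐ[μ] _ := opLp_coeFn μ _ f
    _ =ᵐ[μ] opFun μ κ₁ f + opFun μ κ₂ f := hsum
    _ =ᵐ[μ] (opLp μ κ₁ f : U → ℝ) + (opLp μ κ₂ f : U → ℝ) :=
        ((opLp_coeFn μ κ₁ f).symm.add (opLp_coeFn μ κ₂ f).symm)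
    _ =ᵐ[μ] ((opLp μ κ₁ f + opLp μ κ₂ f : Lp ℝ 2 μ) : U → ℝ) := (Lp.coeFn_add _ _).symm

lemma opLp_smul_left (c : ℝ) (κ : Lp ℝ 2 (μ.prod μ)) (f : Lp ℝ 2 μ) :
    opLp μ (c • κ) f = c • opLp μ κ f := by
  refine Lp.ext ?_
  have hsm : opFun μ ((c • κ : Lp ℝ 2 (μ.prod μ)) : U × U → ℝ) (f : U → ℝ)
      =ᵐ[μ] c • opFun μ κ f := by
    refine (opFun_congr_left μ (Lp.coeFn_smul c κ) _).trans ?_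
    refine Filter.Eventually.of_forall fun x => ?_
    simp only [opFun, Pi.smul_apply, smul_eq_mul]
    rw [← integral_const_mul]
    exact integral_congr_ae (Filter.Eventually.of_forall fun y => by dsimp only; ring)
  calc (opLp μ (c • κ) f : U → ℝ) =ᵐ[μ] _ := opLp_coeFn μ _ f
    _ =ᵐ[μ] c • opFun μ κ f := hsm
    _ =ᵐ[μ] c • (opLp μ κ f : U → ℝ) := (opLp_coeFn μ κ f).symm.const_smul c
    _ =ᵐ[μ] ((c • opLp μ κ f : Lp ℝ 2 μ) : U → ℝ) := (Lp.coeFn_smul _ _).symm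

/-- The integral-operator map, as a continuous linear map from kernels to operators. -/
noncomputable def opCLM : Lp ℝ 2 (μ.prod μ) →L[ℝ] (Lp ℝ 2 μ →L[ℝ] Lp ℝ 2 μ) :=
  LinearMap.mkContinuous
    { toFun := fun κ => LinearMap.mkContinuous
        { toFun := opLp μ κ
          map_add' := opLp_add_right μ κ
          map_smul' := opLp_smul_right μ κ } ‖κ‖ (opLp_norm μ κ)
      map_add' := fun κ₁ κ₂ => ContinuousLinearMap.ext fun f => opLp_add_left μ κ₁ κ₂ f
      map_smul' := fun c κ => ContinuousLinearMap.ext fun f => opLp_smul_left μ c κ f }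
    1 (fun κ => by
      refine ContinuousLinearMap.opNorm_le_bound _ (by positivity) fun f => ?_
      simpa using opLp_norm μ κ f)

lemma opCLM_apply (κ : Lp ℝ 2 (μ.prod μ)) (f : Lp ℝ 2 μ) :
    opCLM μ κ f = opLp μ κ f := rfl


end CLM
section RankOne

lemma isCompactOperator_smulRight {H₁ H₂ : Type*} [NormedAddCommGroup H₁] [NormedSpace ℝ H₁]
    [NormedAddCommGroup H₂] [NormedSpace ℝ H₂] (φ : H₁ →L[ℝ] ℝ) (v : H₂) :
    IsCompactOperator (φ.smulRight v) := by
  refine ⟨(fun t : ℝ => t • v) '' Metric.closedBall 0 (‖φ‖ + 1),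
    (isCompact_closedBall _ _).image (continuous_id.smul continuous_const), ?_⟩
  refine Filter.mem_of_superset (Metric.ball_mem_nhds 0 one_pos) ?_
  intro f hf
  refine ⟨φ f, ?_, rfl⟩
  rw [Metric.mem_closedBall, dist_zero_right]
  have h1 : ‖f‖ < 1 := by simpa [dist_zero_right] using hf
  have h2 := φ.le_opNorm f
  have h3 := norm_nonneg φ
  calc ‖φ f‖ ≤ ‖φ‖ * ‖f‖ := h2
    _ ≤ ‖φ‖ + 1 := by nlinarith

end RankOne

section Rect
variable {U : Type*} [MeasurableSpace U] (μ : Measure U) [IsFiniteMeasure μ]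

lemma opCLM_rect {A B : Set U} (hA : MeasurableSet A) (hB : MeasurableSet B) (c : ℝ) :
    opCLM μ (indicatorConstLp 2 (hA.prod hB) (measure_ne_top _ _) c)
      = (innerSL ℝ (indicatorConstLp 2 hB (measure_ne_top μ B) (1 : ℝ))).smulRight
          (indicatorConstLp 2 hA (measure_ne_top μ A) c) := by
  set κ : Lp ℝ 2 (μ.prod μ) := indicatorConstLp 2 (hA.prod hB) (measure_ne_top _ _) c with hκ
  refine ContinuousLinearMap.ext fun f => Lp.ext ?_
  have hRHS : (((innerSL ℝ (indicatorConstLp 2 hB (measure_ne_top μ B) (1 : ℝ))).smulRight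
      (indicatorConstLp 2 hA (measure_ne_top μ A) c)) f : U → ℝ)
      =ᵐ[μ] fun x => (∫ y in B, f y ∂μ) • (A.indicator (fun _ => c) x) := by
    rw [ContinuousLinearMap.smulRight_apply]
    refine (Lp.coeFn_smul _ _).trans ?_
    have := L2.inner_indicatorConstLp_one (𝕜 := ℝ) hB (measure_ne_top μ B) f
    rw [innerSL_apply_apply, this]
    exact indicatorConstLp_coeFn.mono fun x hx => by
      simp only [Pi.smul_apply]; rw [hx]
  refine Filter.EventuallyEq.trans ?_ hRHS.symm
  refine (opLp_coeFn μ κ f).trans ?_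
  filter_upwards [Measure.ae_ae_of_ae_prod (indicatorConstLp_coeFn (μ := μ.prod μ) (p := 2)
    (hs := hA.prod hB) (hμs := measure_ne_top (μ.prod μ) _) (c := c))] with x hx
  have : opFun μ (κ : U × U → ℝ) f x
      = ∫ y, (A ×ˢ B).indicator (fun _ => c) (x, y) * f y ∂μ :=
    integral_congr_ae (hx.mono fun y hy => by dsimp only; rw [hy])
  rw [this]
  by_cases hxA : x ∈ A
  · have heq : ∀ y, (A ×ˢ B).indicator (fun _ => c) (x, y) * f y
        = B.indicator (fun y => c * f y) y := by
      intro y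
      by_cases hy : y ∈ B <;>
        simp [Set.indicator_apply, Set.mem_prod, hxA, hy]
    rw [integral_congr_ae (Filter.Eventually.of_forall heq), integral_indicator hB,
      integral_const_mul, Set.indicator_of_mem hxA]
    simp [mul_comm]
  · have heq : ∀ y, (A ×ˢ B).indicator (fun _ => c) (x, y) * f y = 0 := by
      intro y
      have : (x, y) ∉ A ×ˢ B := fun h => hxA h.1
      simp [Set.indicator_of_notMem this]
    rw [integral_congr_ae (Filter.Eventually.of_forall heq), integral_zero,
      Set.indicator_of_notMem hxA, smul_zero]

end Rect
section Density
variable {U : Type*} [MeasurableSpace U] (μ : Measure U) [IsFiniteMeasure μ]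

lemma indicatorConstLp_congr_set {α : Type*} [MeasurableSpace α] {ν : Measure α} {p : ℝ≥0∞}
    {s t : Set α} (h : s = t) (hs : MeasurableSet s) (ht : MeasurableSet t)
    (hμs : ν s ≠ ∞) (hμt : ν t ≠ ∞) (c : ℝ) :
    indicatorConstLp p hs hμs c = indicatorConstLp p ht hμt c := by subst h; rfl

/-- The span of indicators of measurable rectangles in `L²(μ × μ)`. -/
noncomputable def rectSpan : Submodule ℝ (Lp ℝ 2 (μ.prod μ)) :=
  Submodule.span ℝ {g | ∃ (A B : Set U) (hA : MeasurableSet A) (hB : MeasurableSet B) (c : ℝ),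
    g = indicatorConstLp 2 (hA.prod hB) (measure_ne_top _ _) c}

lemma indicatorConstLp_mem_closure_rectSpan :
    ∀ ⦃s : Set (U × U)⦄, MeasurableSet s → ∀ (hs : MeasurableSet s) (c : ℝ),
      indicatorConstLp 2 hs (measure_ne_top _ _) c ∈ (rectSpan μ).topologicalClosure := by
  have huniv : ∀ c : ℝ, indicatorConstLp 2 MeasurableSet.univ
      (measure_ne_top (μ.prod μ) _) c ∈ rectSpan μ := by
    intro c
    refine Submodule.subset_span ⟨Set.univ, Set.univ, MeasurableSet.univ, MeasurableSet.univ, c, ?_⟩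
    exact indicatorConstLp_congr_set Set.univ_prod_univ.symm _ _ _ _ c
  refine MeasurableSpace.induction_on_inter (C := fun t _ => ∀ (ht : MeasurableSet t) (c : ℝ),
      indicatorConstLp 2 ht (measure_ne_top _ _) c ∈ (rectSpan μ).topologicalClosure)
    generateFrom_prod.symm isPiSystem_prod ?_ ?_ ?_ ?_
  · -- empty set
    intro _ c
    have : indicatorConstLp (μ := μ.prod μ) (E := ℝ) 2 MeasurableSet.empty
        (by simp) c = 0 := indicatorConstLp_empty
    rw [this]
    exact Submodule.zero_mem _
  · -- rectangles
    rintro t ⟨A, hA, B, hB, rfl⟩ ht c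
    exact Submodule.le_topologicalClosure _ (Submodule.subset_span ⟨A, B, hA, hB, c, rfl⟩)
  · -- complement
    intro t htm hC htc c
    have h1 : indicatorConstLp (μ := μ.prod μ) 2 MeasurableSet.univ (measure_ne_top _ _) c
        = indicatorConstLp 2 htm (measure_ne_top _ _) c
          + indicatorConstLp 2 htm.compl (measure_ne_top _ _) c := by
      rw [← indicatorConstLp_disjoint_union htm htm.compl (measure_ne_top _ _) (measure_ne_top _ _)
        disjoint_compl_right]
      exact indicatorConstLp_congr_set (Set.union_compl_self t).symm _ _ _ _ c
    have h2 : indicatorConstLp (μ := μ.prod μ) 2 htc (measure_ne_top _ _) c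
        = indicatorConstLp 2 MeasurableSet.univ (measure_ne_top _ _) c
          - indicatorConstLp 2 htm (measure_ne_top _ _) c := by
      rw [h1]; abel
    rw [h2]
    exact Submodule.sub_mem _ (Submodule.le_topologicalClosure _ (huniv c)) (hC htm c)
  · -- disjoint unions
    intro f hdisj hfm hC hunion c
    set S : ℕ → Set (U × U) := fun n => ⋃ i ∈ Finset.range n, f i with hS
    have hSmeas : ∀ n, MeasurableSet (S n) :=
      fun n => MeasurableSet.biUnion (Finset.range n).countable_toSet fun i _ => hfm i
    have hSsucc : ∀ n, S (n + 1) = f n ∪ S n := by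
      intro n
      rw [hS]
      simp only [Finset.range_add_one, Finset.mem_insert]
      exact Set.biUnion_insert n (Finset.range n : Set ℕ) f
    have hSdisj : ∀ n, Disjoint (f n) (S n) := by
      intro n
      refine Set.disjoint_iUnion₂_right.mpr fun i hi => ?_
      exact hdisj (Nat.ne_of_lt (Finset.mem_range.mp hi)).symm
    have hmem : ∀ n, indicatorConstLp 2 (hSmeas n) (measure_ne_top _ _) c
        ∈ (rectSpan μ).topologicalClosure := by
      intro n
      induction n with
      | zero =>
        have h0 : S 0 = (∅ : Set (U × U)) := by simp [hS]
        rw [indicatorConstLp_congr_set h0 (hSmeas 0) MeasurableSet.empty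
          (measure_ne_top _ _) (measure_ne_top _ _) c]
        have : indicatorConstLp (μ := μ.prod μ) (E := ℝ) 2 MeasurableSet.empty
            (by simp) c = 0 := indicatorConstLp_empty
        rw [this]
        exact Submodule.zero_mem _
      | succ n ih =>
        rw [indicatorConstLp_congr_set (hSsucc n) (hSmeas (n+1))
          ((hfm n).union (hSmeas n)) (measure_ne_top _ _) (measure_ne_top _ _) c,
          indicatorConstLp_disjoint_union (hfm n) (hSmeas n) (measure_ne_top _ _)
          (measure_ne_top _ _) (hSdisj n)]
        exact Submodule.add_mem _ (hC n (hfm n) c) ih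
    -- convergence of the indicators
    have hmono : Monotone S := by
      intro a b hab
      exact Set.biUnion_subset_biUnion_left
        (Finset.coe_subset.mpr (Finset.range_subset_range.mpr hab))
    have hUnionS : (⋃ n, S n) = ⋃ i, f i := by
      apply Set.Subset.antisymm
      · exact Set.iUnion_subset fun n => Set.iUnion₂_subset fun i _ => Set.subset_iUnion f i
      · refine Set.iUnion_subset fun i => ?_
        refine Set.subset_iUnion_of_subset (i + 1) ?_
        exact Set.subset_biUnion_of_mem (Finset.self_mem_range_succ i)
    have hsub : ∀ n, S n ⊆ ⋃ i, f i := fun n =>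
      hUnionS ▸ Set.subset_iUnion S n
    have hmeasTendsto : Filter.Tendsto (fun n => ((μ.prod μ) ((⋃ i, f i) \ S n)).toReal)
        Filter.atTop (nhds 0) := by
      have h1 : Filter.Tendsto (fun n => (μ.prod μ) (S n)) Filter.atTop
          (nhds ((μ.prod μ) (⋃ i, f i))) := by
        rw [← hUnionS]
        exact tendsto_measure_iUnion_atTop hmono
      have h2 : Filter.Tendsto (fun n => ((μ.prod μ) (S n)).toReal) Filter.atTop
          (nhds (((μ.prod μ) (⋃ i, f i)).toReal)) :=
        (ENNReal.tendsto_toReal (measure_ne_top _ _)).comp h1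
      have h3 : ∀ n, ((μ.prod μ) ((⋃ i, f i) \ S n)).toReal
          = ((μ.prod μ) (⋃ i, f i)).toReal - ((μ.prod μ) (S n)).toReal := by
        intro n
        rw [measure_diff (hsub n) (hSmeas n).nullMeasurableSet (measure_ne_top _ _),
          ENNReal.toReal_sub_of_le (measure_mono (hsub n)) (measure_ne_top _ _)]
      simp only [h3]
      simpa using (tendsto_const_nhds (x := ((μ.prod μ) (⋃ i, f i)).toReal)).sub h2
    have hnormTendsto : Filter.Tendsto
        (fun n => ‖indicatorConstLp (μ := μ.prod μ) (E := ℝ) 2 hunion (measure_ne_top _ _) c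
          - indicatorConstLp 2 (hSmeas n) (measure_ne_top _ _) c‖) Filter.atTop (nhds 0) := by
      have hdiff : ∀ n, indicatorConstLp (μ := μ.prod μ) (E := ℝ) 2 hunion (measure_ne_top _ _) c
          - indicatorConstLp 2 (hSmeas n) (measure_ne_top _ _) c
          = indicatorConstLp 2 (hunion.diff (hSmeas n)) (measure_ne_top _ _) c := by
        intro n
        have hsplit : indicatorConstLp (μ := μ.prod μ) (E := ℝ) 2 hunion (measure_ne_top _ _) c
            = indicatorConstLp 2 (hSmeas n) (measure_ne_top _ _) c
              + indicatorConstLp 2 (hunion.diff (hSmeas n)) (measure_ne_top _ _) c := by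
          rw [← indicatorConstLp_disjoint_union (hSmeas n) (hunion.diff (hSmeas n))
            (measure_ne_top _ _) (measure_ne_top _ _) Set.disjoint_sdiff_right]
          exact indicatorConstLp_congr_set (Set.union_diff_cancel (hsub n)).symm _ _ _ _ c
        rw [hsplit]; abel
      simp only [hdiff, norm_indicatorConstLp (by norm_num : (2:ℝ≥0∞) ≠ 0)
        (by norm_num : (2:ℝ≥0∞) ≠ ∞)]
      have hrpow : Filter.Tendsto (fun n => ((μ.prod μ) ((⋃ i, f i) \ S n)).toReal
          ^ (1 / (2:ℝ≥0∞).toReal)) Filter.atTop (nhds 0) := by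
        have hc := (Real.continuousAt_rpow_const 0 (1 / (2:ℝ≥0∞).toReal)
          (Or.inr (by norm_num))).tendsto.comp hmeasTendsto
        simpa [Real.zero_rpow (by norm_num : (1 / (2:ℝ≥0∞).toReal) ≠ 0), Function.comp_def] using hc
      simpa [Measure.real] using (tendsto_const_nhds (x := ‖c‖)).mul hrpow
    have htendsto : Filter.Tendsto (fun n => indicatorConstLp (μ := μ.prod μ) (E := ℝ) 2
        (hSmeas n) (measure_ne_top _ _) c) Filter.atTop
        (nhds (indicatorConstLp 2 hunion (measure_ne_top _ _) c)) := by
      rw [tendsto_iff_norm_sub_tendsto_zero]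
      simpa [norm_sub_rev] using hnormTendsto
    exact (Submodule.isClosed_topologicalClosure _).mem_of_tendsto htendsto
      (Filter.Eventually.of_forall hmem)

end Density
section AllCompact
variable {U : Type*} [MeasurableSpace U] (μ : Measure U) [IsFiniteMeasure μ]

lemma rectSpan_dense : ∀ κ : Lp ℝ 2 (μ.prod μ), κ ∈ (rectSpan μ).topologicalClosure := by
  haveI : Fact ((1 : ℝ≥0∞) ≤ 2) := ⟨by norm_num⟩
  refine Lp.induction (by norm_num : (2 : ℝ≥0∞) ≠ ∞)
    (fun κ => κ ∈ (rectSpan μ).topologicalClosure) ?_ ?_ ?_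
  · intro c s hs hμs
    rw [Lp.simpleFunc.coe_indicatorConst]
    exact indicatorConstLp_mem_closure_rectSpan μ hs hs c
  · intro f g hf hg hdisj hfmem hgmem
    exact Submodule.add_mem _ hfmem hgmem
  · exact IsClosed.preimage continuous_id (Submodule.isClosed_topologicalClosure _)

theorem opCLM_isCompactOperator (κ : Lp ℝ 2 (μ.prod μ)) :
    IsCompactOperator (opCLM μ κ) := by
  set Scomp : Set (Lp ℝ 2 μ →L[ℝ] Lp ℝ 2 μ) := {T | IsCompactOperator T} with hScomp
  have hclosed : IsClosed ((opCLM μ) ⁻¹' Scomp) :=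
    IsClosed.preimage (opCLM μ).continuous isClosed_setOf_isCompactOperator
  have hspan : (rectSpan μ : Set (Lp ℝ 2 (μ.prod μ))) ⊆ (opCLM μ) ⁻¹' Scomp := by
    intro κ' hκ'
    refine Submodule.span_induction (p := fun g _ => g ∈ (opCLM μ) ⁻¹' Scomp) ?_ ?_ ?_ ?_ hκ'
    · rintro g ⟨A, B, hA, hB, c, rfl⟩
      show IsCompactOperator (opCLM μ _)
      rw [opCLM_rect μ hA hB c]
      exact isCompactOperator_smulRight _ _
    · show IsCompactOperator (opCLM μ 0)
      rw [map_zero]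
      simpa using isCompactOperator_zero (M₁ := Lp ℝ 2 μ) (M₂ := Lp ℝ 2 μ)
    · intro x y hx hy hpx hpy
      show IsCompactOperator (opCLM μ (x + y))
      rw [map_add]
      have := IsCompactOperator.add hpx hpy
      simpa using this
    · intro c x hx hpx
      show IsCompactOperator (opCLM μ (c • x))
      rw [_root_.map_smul]
      have := hpx.smul c
      simpa using this
  have h2 : κ ∈ ((rectSpan μ).topologicalClosure : Set (Lp ℝ 2 (μ.prod μ))) :=
    rectSpan_dense μ κ
  rw [Submodule.topologicalClosure_coe] at h2
  exact closure_minimal hspan hclosed h2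

end AllCompact
section Sq

lemma isCompactOperator_of_sq {H : Type*} [NormedAddCommGroup H] [InnerProductSpace ℝ H]
    [CompleteSpace H] (S : H →L[ℝ] H) (hsym : ∀ f g : H, ⟪S f, g⟫ = ⟪f, S g⟫)
    (h2 : IsCompactOperator (S.comp S)) : IsCompactOperator S := by
  have hiff1 := isCompactOperator_iff_isCompact_closure_image_closedBall
    (σ₁₂ := RingHom.id ℝ) S.toLinearMap (zero_lt_one (α := ℝ))
  have hiff2 := isCompactOperator_iff_isCompact_closure_image_closedBall
    (σ₁₂ := RingHom.id ℝ) (S.comp S).toLinearMap (zero_lt_one (α := ℝ))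
  refine hiff1.mpr ?_
  have h2' : TotallyBounded ((fun x => S (S x)) '' Metric.closedBall 0 1) := by
    have hcc := hiff2.mp h2
    exact (hcc.totallyBounded).subset subset_closure
  show IsCompact (closure ((fun x => S x) '' Metric.closedBall 0 1))
  refine TotallyBounded.isCompact_of_isClosed (TotallyBounded.closure ?_) isClosed_closure
  rw [Metric.totallyBounded_iff]
  intro ε hε
  obtain ⟨t, hts, htfin, hcover⟩ := totallyBounded_iff_subset.mp h2'
    {p : H × H | dist p.1 p.2 < ε ^ 2 / 8} (Metric.dist_mem_uniformity (by positivity))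
  have hpre : ∀ y : H, ∃ x : H, y ∈ t → (x ∈ Metric.closedBall (0 : H) 1 ∧ S (S x) = y) := by
    intro y
    by_cases hy : y ∈ t
    · rcases hts hy with ⟨x, hx, hxy⟩
      exact ⟨x, fun _ => ⟨hx, hxy⟩⟩
    · exact ⟨0, fun h => absurd h hy⟩
  choose g hg using hpre
  refine ⟨(fun y => S (g y)) '' t, htfin.image _, ?_⟩
  rintro - ⟨x, hx, rfl⟩
  have hx2 : S (S x) ∈ ⋃ y ∈ t, {z : H | dist z y < ε ^ 2 / 8} := by
    have := hcover ⟨x, hx, rfl⟩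
    rw [Set.mem_iUnion₂] at this
    rw [Set.mem_iUnion₂]
    obtain ⟨y, hy1, hy2⟩ := this
    exact ⟨y, hy1, hy2⟩
  rw [Set.mem_iUnion₂] at hx2
  obtain ⟨y, hyt, hdist⟩ := hx2
  refine Set.mem_iUnion₂.mpr ⟨S (g y), ⟨y, hyt, rfl⟩, ?_⟩
  obtain ⟨hgball, hgy⟩ := hg y hyt
  rw [Metric.mem_ball, dist_eq_norm]
  set d := x - g y with hd
  have hSd : S x - S (g y) = S d := (map_sub S x (g y)).symm
  have hsq : ‖S x - S (g y)‖ ^ 2 = ⟪d, S (S d)⟫ := by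
    rw [hSd, ← real_inner_self_eq_norm_sq]
    exact hsym d (S d)
  have hS2d : S (S d) = S (S x) - y := by
    rw [hd, map_sub, map_sub, hgy]
  have hbound : ⟪d, S (S d)⟫ ≤ ‖d‖ * ‖S (S d)‖ := real_inner_le_norm d (S (S d))
  have hdnorm : ‖d‖ ≤ 2 := by
    rw [hd]
    have hx1 : ‖x‖ ≤ 1 := mem_closedBall_zero_iff.mp hx
    have hg1 : ‖g y‖ ≤ 1 := mem_closedBall_zero_iff.mp hgball
    calc ‖x - g y‖ ≤ ‖x‖ + ‖g y‖ := norm_sub_le _ _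
      _ ≤ 2 := by linarith
  have hS2dnorm : ‖S (S d)‖ < ε ^ 2 / 8 := by
    rw [hS2d, ← dist_eq_norm]
    exact hdist
  have hlt : ‖S x - S (g y)‖ ^ 2 < (ε / 2) ^ 2 := by
    have h0 : (0:ℝ) ≤ ‖S (S d)‖ := norm_nonneg _
    have := hsq
    nlinarith [norm_nonneg d]
  have := lt_of_pow_lt_pow_left₀ 2 (by positivity : (0:ℝ) ≤ ε / 2) hlt
  linarith
end Sq

/-- **Lemma 2.2.** On a finite measure space, if a strongly continuous semigroup of self-adjoint
continuous linear operators on `L²(μ)` is, at some time `t₀ > 0`, an integral operator with an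
essentially bounded measurable kernel, then `P_t` is a compact operator for every `t > 0`. -/
theorem stmt2 {U : Type*} [MeasurableSpace U] (μ : Measure U) [IsFiniteMeasure μ]
    (P : ℝ≥0 → (Lp ℝ 2 μ →L[ℝ] Lp ℝ 2 μ))
    (hP0 : P 0 = ContinuousLinearMap.id ℝ (Lp ℝ 2 μ))
    (hPadd : ∀ s t : ℝ≥0, P (s + t) = (P s).comp (P t))
    (hsym : ∀ (t : ℝ≥0) (f g : Lp ℝ 2 μ), ⟪P t f, g⟫ = ⟪f, P t g⟫)
    (hcont : ∀ f : Lp ℝ 2 μ, Continuous fun t : ℝ≥0 => P t f)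
    (t₀ : ℝ≥0) (ht₀ : 0 < t₀) (C : ℝ) (hC : 0 ≤ C)
    (k : U × U → ℝ) (hk : Measurable k)
    (hbd : ∀ᵐ z ∂(μ.prod μ), |k z| ≤ C)
    (hker : ∀ f : Lp ℝ 2 μ, ∀ᵐ x ∂μ, (P t₀ f : U → ℝ) x = ∫ y, k (x, y) * f y ∂μ) :
    ∀ t : ℝ≥0, 0 < t → IsCompactOperator (P t) := by
  -- the kernel is in `L²` of the product
  have hk2 : MemLp k 2 (μ.prod μ) :=
    MemLp.of_bound hk.aestronglyMeasurable C
      (hbd.mono fun z hz => by simpa [Real.norm_eq_abs] using hz)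
  set κ : Lp ℝ 2 (μ.prod μ) := hk2.toLp k with hκdef
  -- `P t₀` is the integral operator with kernel `κ`
  have hPt₀ : P t₀ = opCLM μ κ := by
    refine ContinuousLinearMap.ext fun f => Lp.ext ?_
    have h2 : (opCLM μ κ f : U → ℝ) =ᵐ[μ] opFun μ κ f := opLp_coeFn μ κ f
    have h3 : opFun μ (κ : U × U → ℝ) f =ᵐ[μ] fun x => ∫ y, k (x, y) * f y ∂μ := by
      filter_upwards [Measure.ae_ae_of_ae_prod (hk2.coeFn_toLp :
        (κ : U × U → ℝ) =ᵐ[μ.prod μ] k)] with x hx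
      exact integral_congr_ae (hx.mono fun y hy => by dsimp only; rw [hy])
    have h1 : (⇑(P t₀ f) : U → ℝ) =ᵐ[μ] fun x => ∫ y, k (x, y) * f y ∂μ := hker f
    exact h1.trans (h3.symm.trans h2.symm)
  have hcompact₀ : IsCompactOperator (P t₀) := by
    rw [hPt₀]; exact opCLM_isCompactOperator μ κ
  -- dyadic times `t₀ / 2 ^ n`
  have hdyadic : ∀ n : ℕ, IsCompactOperator (P (t₀ / 2 ^ n)) := by
    intro n
    induction n with
    | zero => simpa using hcompact₀
    | succ n ih =>
      refine isCompactOperator_of_sq (P (t₀ / 2 ^ (n + 1))) (hsym _) ?_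
      have hhalf : (t₀ / 2 ^ (n + 1)) + (t₀ / 2 ^ (n + 1)) = t₀ / 2 ^ n := by
        rw [pow_succ, ← div_div]
        exact add_halves _
      rw [← hhalf, hPadd] at ih
      exact ih
  intro t ht
  obtain ⟨n, hn⟩ := pow_unbounded_of_one_lt (t₀ / t) (one_lt_two (α := ℝ≥0))
  have hle : t₀ / 2 ^ n ≤ t := by
    have h1 : t₀ < 2 ^ n * t := (div_lt_iff₀ ht).mp hn
    rw [div_le_iff₀ (pow_pos two_pos n)]
    rw [mul_comm] at h1
    exact h1.le
  have hsplit : (t - t₀ / 2 ^ n) + t₀ / 2 ^ n = t := tsub_add_cancel_of_le hle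
  have hcomp : P t = (P (t - t₀ / 2 ^ n)).comp (P (t₀ / 2 ^ n)) := by
    rw [← hPadd, hsplit]
  rw [hcomp]
  have := (hdyadic n).continuous_comp (P (t - t₀ / 2 ^ n)).continuous
  exact this
end

section
/- Let (U, 𝒜, μ) be a σ-finite measure space and let k : U × U → ℝ be measurable with k(x,y) > 0 for (μ⊗μ)-a.e. (x,y). Let r > 0 and let φ ∈ L²(μ) with φ ≥ 0 μ-a.e., φ not equal to 0 in L²(μ), and suppose that for μ-a.e. x the function y ↦ k(x,y) φ(y) is μ-integrable with r · φ(x) = ∫ k(x,y) φ(y) dμ(y). Then φ(x) > 0 for μ-a.e. x ∈ U. -/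
open MeasureTheory
open scoped ENNReal

/-- **Key step of Theorem 2.6.** A nonnegative, nonzero `L²` eigenfunction, with positive
eigenvalue, of an integral operator whose kernel is a.e. strictly positive, is itself
a.e. strictly positive. -/
theorem stmt4 {U : Type*} [MeasurableSpace U] (μ : Measure U) [SigmaFinite μ]
    (k : U × U → ℝ) (hk : Measurable k)
    (hkpos : ∀ᵐ z ∂(μ.prod μ), 0 < k z)
    (r : ℝ) (hr : 0 < r)
    (φ : Lp ℝ 2 μ) (hφnonneg : 0 ≤ᵐ[μ] (φ : U → ℝ)) (hφne : φ ≠ 0)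
    (heig : ∀ᵐ x ∂μ, Integrable (fun y => k (x, y) * φ y) μ ∧
      r * φ x = ∫ y, k (x, y) * φ y ∂μ) :
    ∀ᵐ x ∂μ, 0 < φ x := by
  have hφne' : ¬ ((φ : U → ℝ) =ᵐ[μ] 0) := by
    intro h
    exact hφne ((Lp.eq_zero_iff_ae_eq_zero).mpr h)
  filter_upwards [heig, Measure.ae_ae_of_ae_prod hkpos] with x hx hkx
  have hnn : 0 ≤ᵐ[μ] fun y => k (x, y) * φ y := by
    filter_upwards [hφnonneg, hkx] with y hy hky
    exact mul_nonneg hky.le hy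
  have hsupp : 0 < μ (Function.support fun y => k (x, y) * φ y) := by
    rw [pos_iff_ne_zero]
    intro h0
    apply hφne'
    have hz : ∀ᵐ y ∂μ, (fun y => k (x, y) * φ y) y = 0 := by
      rw [ae_iff]
      refine measure_mono_null (fun y hy => ?_) h0
      exact hy
    filter_upwards [hz, hkx] with y hy hky
    have := (mul_eq_zero.mp hy).resolve_left (ne_of_gt hky)
    simpa using this
  have hpos : 0 < ∫ y, k (x, y) * φ y ∂μ :=
    (integral_pos_iff_support_of_nonneg_ae hnn hx.1).mpr hsupp
  rw [← hx.2] at hpos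
  nlinarith
end

section
/- Let (X, 𝒜, μ) be a σ-finite measure space and let T be a continuous linear operator on the real Hilbert space L²(μ) which is an integral operator with measurable kernel k : X × X → ℝ satisfying k(x,y) = k(y,x) for (μ⊗μ)-a.e. (x,y). Let p ∈ (1, ∞] and assume c_p := (∫_X ‖k(x,·)‖_{L^p(μ)}² dμ(x))^{1/2} < ∞. If φ ∈ L²(μ), ‖φ‖_{L²(μ)} = 1, r > 0 and T φ = r φ, then φ ∈ L^p(μ) and ‖φ‖_{L^p(μ)} ≤ c_p / r. -/
open MeasureTheory Filter
open scoped ENNReal NNReal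

section Aux
variable {X Y : Type*} [MeasurableSpace X] [MeasurableSpace Y]

/-- Measurability of a parametrized essential supremum. -/
lemma measurable_essSup_param (μ : Measure X) [SFinite μ]
    {F : X → Y → ℝ≥0∞} (hF : Measurable (Function.uncurry F)) :
    Measurable (fun y => essSup (fun x => F x y) μ) := by
  have hm : ∀ q : ℚ, Measurable (fun y => μ {x | ((Real.toNNReal q : ℝ≥0) : ℝ≥0∞) < F x y}) := by
    intro q
    have hs : MeasurableSet {z : X × Y | ((Real.toNNReal q : ℝ≥0) : ℝ≥0∞) < F z.1 z.2} :=
      measurableSet_lt measurable_const hF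
    exact measurable_measure_prodMk_right hs
  have key : (fun y => essSup (fun x => F x y) μ)
      = fun y => ⨅ q : ℚ, (if μ {x | ((Real.toNNReal q : ℝ≥0) : ℝ≥0∞) < F x y} = 0
          then ((Real.toNNReal q : ℝ≥0) : ℝ≥0∞) else ∞) := by
    funext y
    apply le_antisymm
    · refine le_iInf fun q => ?_
      by_cases h : μ {x | ((Real.toNNReal q : ℝ≥0) : ℝ≥0∞) < F x y} = 0
      · simp only [h, if_true]
        refine essSup_le_of_ae_le _ ?_
        rw [Filter.EventuallyLE, ae_iff]
        simpa [not_le] using h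
      · simp [h]
    · set e := essSup (fun x => F x y) μ with he
      by_cases htop : e = ∞
      · simp [htop]
      refine ENNReal.le_of_forall_pos_le_add fun ε hε _ => ?_
      have hlt : e < e + ε := ENNReal.lt_add_right htop (by exact_mod_cast hε.ne')
      obtain ⟨q, hq0, hq1, hq2⟩ := ENNReal.lt_iff_exists_rat_btwn.mp hlt
      have hnull : μ {x | ((Real.toNNReal q : ℝ≥0) : ℝ≥0∞) < F x y} = 0 := by
        have hae := ENNReal.ae_le_essSup (μ := μ) (fun x => F x y)
        rw [ae_iff] at hae
        refine measure_mono_null (fun x hx => ?_) hae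
        simp only [Set.mem_setOf_eq, not_le] at hx ⊢
        exact hq1.trans hx
      refine le_trans (iInf_le _ q) ?_
      simp only [hnull, if_true]
      exact le_trans hq2.le le_rfl
  rw [key]
  refine Measurable.iInf fun q => Measurable.ite ?_ measurable_const measurable_const
  exact (hm q) (measurableSet_singleton 0)
end Aux

open MeasureTheory Filter
open scoped ENNReal NNReal

section Mink
variable {X Y : Type*} [MeasurableSpace X] [MeasurableSpace Y]

/-- **Minkowski's integral inequality** for `ℝ≥0∞`-valued functions. -/
lemma lintegral_minkowski (μ : Measure X) [SigmaFinite μ] (ν : Measure Y) [SFinite ν]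
    {p q : ℝ} (hpq : p.HolderConjugate q)
    {F : X → Y → ℝ≥0∞} (hF : Measurable (Function.uncurry F)) :
    (∫⁻ x, (∫⁻ y, F x y ∂ν) ^ p ∂μ) ^ (1/p) ≤ ∫⁻ y, (∫⁻ x, F x y ^ p ∂μ) ^ (1/p) ∂ν := by
  set G : X → ℝ≥0∞ := fun x => ∫⁻ y, F x y ∂ν with hGdef
  have hGm : Measurable G := hF.lintegral_prod_right'
  set R : ℝ≥0∞ := ∫⁻ y, (∫⁻ x, F x y ^ p ∂μ) ^ (1/p) ∂ν with hRdef
  suffices h : ∫⁻ x, G x ^ p ∂μ ≤ R ^ p by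
    calc (∫⁻ x, G x ^ p ∂μ) ^ (1/p) ≤ (R ^ p) ^ (1/p) :=
          ENNReal.rpow_le_rpow h hpq.one_div_nonneg
      _ = R := by
          rw [← ENNReal.rpow_mul, mul_one_div, div_self hpq.ne_zero, ENNReal.rpow_one]
  have key : ∀ n : ℕ, ∫⁻ x in spanningSets μ n, (min (G x) n) ^ p ∂μ ≤ R ^ p := by
    intro n
    set A := spanningSets μ n with hA
    have hAm : MeasurableSet A := measurableSet_spanningSets μ n
    set Gn : X → ℝ≥0∞ := fun x => min (G x) n with hGn
    have hGnm : Measurable Gn := hGm.min measurable_const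
    have hGnle : ∀ x, Gn x ≤ n := fun x => min_le_right _ _
    have hGnt : ∀ x, Gn x ≠ ∞ := fun x => ((hGnle x).trans_lt (ENNReal.natCast_lt_top n)).ne
    set I : ℝ≥0∞ := ∫⁻ x in A, Gn x ^ p ∂μ with hI
    have hIfin : I ≠ ∞ := by
      have hb : I ≤ (n : ℝ≥0∞) ^ p * μ A := by
        rw [← setLIntegral_const A ((n : ℝ≥0∞) ^ p)]
        exact lintegral_mono fun x => ENNReal.rpow_le_rpow (hGnle x) hpq.nonneg
      refine ne_top_of_le_ne_top ?_ hb
      exact ENNReal.mul_ne_top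
        (ENNReal.rpow_ne_top_of_nonneg hpq.nonneg (ENNReal.natCast_ne_top n))
        (measure_spanningSets_lt_top μ n).ne
    by_cases hI0 : I = 0
    · exact le_of_eq_of_le hI0 zero_le
    have hItop : I ^ (1/q) ≠ ∞ := ENNReal.rpow_ne_top_of_nonneg hpq.symm.one_div_nonneg hIfin
    have hIz : I ^ (1/q) ≠ 0 := by
      simp [ENNReal.rpow_eq_zero_iff, hI0, hIfin, hpq.symm.one_div_pos,
        hpq.symm.one_div_pos.not_gt]
    have step : I ≤ R * I ^ (1/q) := by
      have h1 : I ≤ ∫⁻ x in A, Gn x ^ (p-1) * G x ∂μ := by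
        refine lintegral_mono fun x => ?_
        rcases eq_or_ne (Gn x) 0 with h0 | h0
        · rw [h0, ENNReal.zero_rpow_of_pos hpq.pos]; exact zero_le
        · calc Gn x ^ p = Gn x ^ (p - 1) * Gn x := by
                conv_lhs => rw [show p = (p-1) + 1 by ring]
                rw [ENNReal.rpow_add _ _ h0 (hGnt x), ENNReal.rpow_one]
            _ ≤ Gn x ^ (p-1) * G x := by gcongr; exact min_le_left _ _
      have h2 : ∫⁻ x in A, Gn x ^ (p-1) * G x ∂μ
          = ∫⁻ y, ∫⁻ x in A, Gn x ^ (p-1) * F x y ∂μ ∂ν := by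
        have hmeas : Measurable (Function.uncurry fun x y => Gn x ^ (p-1) * F x y) :=
          ((hGnm.pow_const _).comp measurable_fst).mul hF
        calc ∫⁻ x in A, Gn x ^ (p-1) * G x ∂μ
            = ∫⁻ x in A, ∫⁻ y, Gn x ^ (p-1) * F x y ∂ν ∂μ := by
              refine lintegral_congr fun x => ?_
              have hFx : Measurable fun y => F x y := hF.comp measurable_prodMk_left
              rw [lintegral_const_mul _ hFx]
          _ = _ := lintegral_lintegral_swap hmeas.aemeasurable
      have h3 : ∀ y, ∫⁻ x in A, Gn x ^ (p-1) * F x y ∂μ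
          ≤ (∫⁻ x, F x y ^ p ∂μ) ^ (1/p) * I ^ (1/q) := by
        intro y
        have hFy : Measurable fun x => F x y := hF.comp measurable_prodMk_right
        have hH := ENNReal.lintegral_mul_le_Lp_mul_Lq (μ.restrict A) hpq
          hFy.aemeasurable ((hGnm.pow_const (p-1)).aemeasurable)
        calc ∫⁻ x in A, Gn x ^ (p-1) * F x y ∂μ
            = ∫⁻ x in A, ((fun x => F x y) * fun x => Gn x ^ (p-1)) x ∂μ := by
              refine lintegral_congr fun x => ?_; simp [mul_comm]
          _ ≤ (∫⁻ x in A, F x y ^ p ∂μ) ^ (1/p) * (∫⁻ x in A, (Gn x ^ (p-1)) ^ q ∂μ) ^ (1/q) := hH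
          _ ≤ (∫⁻ x, F x y ^ p ∂μ) ^ (1/p) * I ^ (1/q) := by
              have heq : ∫⁻ x in A, (Gn x ^ (p-1)) ^ q ∂μ = I :=
                lintegral_congr fun x => by rw [← ENNReal.rpow_mul, hpq.sub_one_mul_conj]
              rw [heq]
              exact mul_le_mul'
                (ENNReal.rpow_le_rpow (setLIntegral_le_lintegral _ _) hpq.one_div_nonneg) le_rfl
      calc I ≤ ∫⁻ y, ∫⁻ x in A, Gn x ^ (p-1) * F x y ∂μ ∂ν := h2 ▸ h1
        _ ≤ ∫⁻ y, (∫⁻ x, F x y ^ p ∂μ) ^ (1/p) * I ^ (1/q) ∂ν := lintegral_mono h3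
        _ = R * I ^ (1/q) := lintegral_mul_const' _ _ hItop
    have hsplit : I ^ (1/p) * I ^ (1/q) ≤ R * I ^ (1/q) := by
      rw [← ENNReal.rpow_add _ _ hI0 hIfin,
        show (1:ℝ)/p + 1/q = 1 by rw [one_div, one_div]; exact hpq.inv_add_inv_eq_one,
        ENNReal.rpow_one]
      exact step
    have hcancel : I ^ (1/p) ≤ R := (ENNReal.mul_le_mul_iff_left hIz hItop).mp hsplit
    calc I = (I ^ (1/p)) ^ p := by
          rw [← ENNReal.rpow_mul, one_div, inv_mul_cancel₀ hpq.ne_zero, ENNReal.rpow_one]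
      _ ≤ R ^ p := ENNReal.rpow_le_rpow hcancel hpq.nonneg
  -- monotone convergence
  have mono : Monotone fun n : ℕ =>
      (spanningSets μ n).indicator fun x => (min (G x) n) ^ p := by
    intro n m hnm x
    dsimp only
    by_cases hx : x ∈ spanningSets μ n
    · rw [Set.indicator_of_mem hx, Set.indicator_of_mem (monotone_spanningSets μ hnm hx)]
      exact ENNReal.rpow_le_rpow (min_le_min le_rfl (by exact_mod_cast Nat.cast_le.mpr hnm))
        hpq.nonneg
    · rw [Set.indicator_of_notMem hx]; exact zero_le
  have hsup : ∀ x, (⨆ n : ℕ, (spanningSets μ n).indicator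
      (fun x => (min (G x) n) ^ p) x) = G x ^ p := by
    intro x
    apply le_antisymm
    · refine iSup_le fun n => ?_
      refine le_trans (Set.indicator_le_self _ _ x) ?_
      exact ENNReal.rpow_le_rpow (min_le_left _ _) hpq.nonneg
    · obtain ⟨N, hN⟩ : ∃ N, x ∈ spanningSets μ N := by
        have := iUnion_spanningSets μ
        have hx : x ∈ ⋃ n, spanningSets μ n := by rw [this]; trivial
        exact Set.mem_iUnion.mp hx
      have hterm : ∀ m : ℕ, (min (G x) m) ^ p
          ≤ ⨆ n : ℕ, (spanningSets μ n).indicator (fun x => (min (G x) n) ^ p) x := by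
        intro m
        refine le_trans ?_ (le_iSup _ (max m N))
        rw [Set.indicator_of_mem (monotone_spanningSets μ (le_max_right m N) hN)]
        exact ENNReal.rpow_le_rpow
          (min_le_min le_rfl (by exact_mod_cast Nat.cast_le.mpr (le_max_left m N))) hpq.nonneg
      rcases eq_or_ne (G x) ∞ with htop | htop
      · have : ∀ m : ℕ, (m : ℝ≥0∞) ^ p
            ≤ ⨆ n : ℕ, (spanningSets μ n).indicator (fun x => (min (G x) n) ^ p) x := by
          intro m; simpa [htop] using hterm m
        rw [htop, ENNReal.top_rpow_of_pos hpq.pos]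
        calc (∞ : ℝ≥0∞) = ⨆ m : ℕ, (m : ℝ≥0∞) := ENNReal.iSup_natCast.symm
          _ ≤ ⨆ m : ℕ, (m : ℝ≥0∞) ^ p := by
              refine iSup_mono fun m => ?_
              rcases Nat.eq_zero_or_pos m with rfl | hm
              · simp
              · conv_lhs => rw [← ENNReal.rpow_one (m : ℝ≥0∞)]
                exact ENNReal.rpow_le_rpow_of_exponent_le
                  (by exact_mod_cast Nat.one_le_cast.mpr hm) hpq.lt.le
          _ ≤ _ := iSup_le this
      · obtain ⟨m, hm⟩ := ENNReal.exists_nat_gt htop.lt_top.ne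
        have := hterm m
        rwa [min_eq_left hm.le] at this
  calc ∫⁻ x, G x ^ p ∂μ
      = ∫⁻ x, ⨆ n : ℕ, (spanningSets μ n).indicator (fun x => (min (G x) n) ^ p) x ∂μ := by
        refine lintegral_congr fun x => (hsup x).symm
    _ = ⨆ n : ℕ, ∫⁻ x, (spanningSets μ n).indicator (fun x => (min (G x) n) ^ p) x ∂μ := by
        refine lintegral_iSup (fun n => ?_) mono
        exact ((hGm.min measurable_const).pow_const p).indicator (measurableSet_spanningSets μ n)
    _ ≤ R ^ p := by
        refine iSup_le fun n => ?_
        rw [lintegral_indicator (measurableSet_spanningSets μ n)]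
        exact key n
end Mink

open MeasureTheory
open scoped ENNReal

/-- **Theorem 2.10(1), upper bound.** If `T` is an integral operator on `L²(μ)` with a symmetric
measurable kernel `k`, `p ∈ (1, ∞]`, and `c_p := (∫ ‖k(x,·)‖_{L^p}² dμ(x))^{1/2} < ∞`, then any
`L²`-normalized eigenfunction `φ` with `T φ = r φ`, `r > 0`, belongs to `L^p(μ)` and satisfies
`‖φ‖_{L^p} ≤ c_p / r`. -/
theorem stmt5 {X : Type*} [MeasurableSpace X] (μ : Measure X) [SigmaFinite μ]
    (T : Lp ℝ 2 μ →L[ℝ] Lp ℝ 2 μ)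
    (k : X × X → ℝ) (hk : Measurable k)
    (hsym : ∀ᵐ z ∂(μ.prod μ), k z = k z.swap)
    (hker : ∀ f : Lp ℝ 2 μ, ∀ᵐ x ∂μ, (T f : X → ℝ) x = ∫ y, k (x, y) * f y ∂μ)
    (p : ℝ≥0∞) (hp : 1 < p)
    (hcfin : (∫⁻ x, (eLpNorm (fun y => k (x, y)) p μ) ^ 2 ∂μ) ≠ ∞)
    (φ : Lp ℝ 2 μ) (hφ : ‖φ‖ = 1) (r : ℝ) (hr : 0 < r) (hTφ : T φ = r • φ) :
    MemLp (φ : X → ℝ) p μ ∧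
      (eLpNorm (φ : X → ℝ) p μ).toReal ≤
        ((∫⁻ x, (eLpNorm (fun y => k (x, y)) p μ) ^ 2 ∂μ) ^ (1/2 : ℝ)).toReal / r := by
  classical
  set C : ℝ≥0∞ := ∫⁻ x, (eLpNorm (fun y => k (x, y)) p μ) ^ 2 ∂μ with hCdef
  set ρ : ℝ≥0∞ := ENNReal.ofReal r with hρdef
  have hρ0 : ρ ≠ 0 := by simp [hρdef, ENNReal.ofReal_eq_zero, not_le, hr]
  have hρtop : ρ ≠ ∞ := ENNReal.ofReal_ne_top
  have hφm : Measurable (φ : X → ℝ) := (Lp.stronglyMeasurable φ).measurable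
  set g : X → ℝ≥0∞ := fun x => (‖(φ : X → ℝ) x‖₊ : ℝ≥0∞) with hgdef
  have hgm : Measurable g := hφm.enorm
  set K : X × X → ℝ≥0∞ := fun z => (‖k z‖₊ : ℝ≥0∞) with hKdef
  have hKm : Measurable K := hk.enorm
  set G : X → ℝ≥0∞ := fun x => ∫⁻ y, K (x, y) * g y ∂μ with hGdef
  have hpow2 : ∀ a : ℝ≥0∞, a ^ (2:ℝ) = a ^ (2:ℕ) := fun a => by
    rw [← ENNReal.rpow_natCast]; norm_num
  have hCS2 : Real.HolderConjugate 2 2 := Real.HolderConjugate.two_two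
  -- eigenvalue equation, as an a.e. inequality in `ℝ≥0∞`
  have hae : ∀ᵐ x ∂μ, ρ * g x ≤ G x := by
    have h2 : (T φ : X → ℝ) =ᵐ[μ] fun x => r * (φ : X → ℝ) x := by
      rw [hTφ]
      filter_upwards [Lp.coeFn_smul r φ] with x hx
      simpa [smul_eq_mul] using hx
    filter_upwards [hker φ, h2] with x h1 h2'
    have heq : r * (φ : X → ℝ) x = ∫ y, k (x, y) * (φ : X → ℝ) y ∂μ := by rw [← h2']; exact h1
    calc ρ * g x = (‖r‖₊ : ℝ≥0∞) * (‖(φ : X → ℝ) x‖₊ : ℝ≥0∞) := by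
          rw [hρdef, ← Real.enorm_eq_ofReal hr.le]; rfl
      _ = (‖r * (φ : X → ℝ) x‖₊ : ℝ≥0∞) := by rw [← ENNReal.coe_mul, ← nnnorm_mul]
      _ = (‖∫ y, k (x, y) * (φ : X → ℝ) y ∂μ‖₊ : ℝ≥0∞) := by rw [heq]
      _ ≤ ∫⁻ y, ‖k (x, y) * (φ : X → ℝ) y‖₊ ∂μ := enorm_integral_le_lintegral_enorm _
      _ = G x := by
          refine lintegral_congr fun y => ?_
          rw [nnnorm_mul, ENNReal.coe_mul]
  -- the L² norm of φ is 1
  have hsn : eLpNorm (φ : X → ℝ) 2 μ = 1 := by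
    have h1 : (eLpNorm (φ : X → ℝ) 2 μ).toReal = 1 := by rw [← Lp.norm_def]; exact hφ
    have h2 : eLpNorm (φ : X → ℝ) 2 μ ≠ ∞ := Lp.eLpNorm_ne_top φ
    rw [← ENNReal.ofReal_toReal h2, h1, ENNReal.ofReal_one]
  have hφ2 : ∫⁻ x, g x ^ (2:ℝ) ∂μ = 1 := by
    rw [eLpNorm_eq_lintegral_rpow_enorm_toReal (two_ne_zero) (ENNReal.ofNat_ne_top)] at hsn
    simp only [ENNReal.toReal_ofNat] at hsn
    have := congrArg (· ^ (2:ℝ)) hsn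
    simp only [← ENNReal.rpow_mul, one_div] at this
    rw [inv_mul_cancel₀ (by norm_num : (2:ℝ) ≠ 0), ENNReal.rpow_one, ENNReal.one_rpow] at this
    exact this
  -- symmetry, a.e. in the first variable
  have hsym' : ∀ᵐ x ∂μ, (fun y => k (x, y)) =ᵐ[μ] (fun y => k (y, x)) := by
    filter_upwards [Measure.ae_ae_of_ae_prod hsym] with x hx
    filter_upwards [hx] with y hy
    exact hy
  -- it suffices to bound the `eLpNorm` by `C ^ (1/2) / ρ`
  suffices hE : eLpNorm (φ : X → ℝ) p μ ≤ C ^ (1/2:ℝ) / ρ by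
    have hCh : C ^ (1/2:ℝ) ≠ ∞ := ENNReal.rpow_ne_top_of_nonneg (by norm_num) hcfin
    have hfin : C ^ (1/2:ℝ) / ρ < ∞ := ENNReal.div_lt_top hCh hρ0
    constructor
    · exact ⟨(Lp.memLp φ).aestronglyMeasurable, lt_of_le_of_lt hE hfin⟩
    · have h1 := ENNReal.toReal_mono hfin.ne hE
      rwa [ENNReal.toReal_div, hρdef, ENNReal.toReal_ofReal hr.le] at h1
  by_cases hptop : p = ∞
  · -- case p = ∞
    subst hptop
    set S : X → ℝ≥0∞ := fun y => essSup (fun x => K (x, y)) μ with hSdef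
    have hSm : Measurable S := measurable_essSup_param μ (F := fun x y => K (x, y)) hKm
    have hswap : ∀ᵐ x ∂μ, ∀ᵐ y ∂μ, K (x, y) ≤ S y := by
      have hms : MeasurableSet {z : X × X | K (z.1, z.2) ≤ S z.2} :=
        measurableSet_le (by exact hKm) (hSm.comp measurable_snd)
      rw [Measure.ae_ae_comm (p := fun x y => K (x, y) ≤ S y) hms]
      exact Filter.Eventually.of_forall fun y => ENNReal.ae_le_essSup _
    have hCeq : C = ∫⁻ x, S x ^ 2 ∂μ := by
      refine lintegral_congr_ae ?_
      filter_upwards [hsym'] with x hx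
      have h : eLpNorm (fun y => k (x, y)) ∞ μ = S x := by
        rw [eLpNorm_exponent_top, eLpNormEssSup]
        exact essSup_congr_ae (hx.mono fun y hy => congrArg (fun t : ℝ => ((‖t‖₊ : ℝ≥0) : ℝ≥0∞)) hy)
      rw [h]
    have hbound : ∀ᵐ x ∂μ, g x ≤ C ^ (1/2:ℝ) / ρ := by
      filter_upwards [hae, hswap] with x h1 h2
      have hGle : G x ≤ C ^ (1/2:ℝ) := by
        calc G x = ∫⁻ y, ((fun y => K (x, y)) * g) y ∂μ := rfl
          _ ≤ (∫⁻ y, K (x, y) ^ (2:ℝ) ∂μ) ^ (1/2:ℝ) * (∫⁻ y, g y ^ (2:ℝ) ∂μ) ^ (1/2:ℝ) :=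
              ENNReal.lintegral_mul_le_Lp_mul_Lq μ hCS2
                (hKm.comp measurable_prodMk_left).aemeasurable hgm.aemeasurable
          _ = (∫⁻ y, K (x, y) ^ (2:ℝ) ∂μ) ^ (1/2:ℝ) := by
              rw [hφ2, ENNReal.one_rpow, mul_one]
          _ ≤ (∫⁻ y, S y ^ (2:ℝ) ∂μ) ^ (1/2:ℝ) := by
              refine ENNReal.rpow_le_rpow (lintegral_mono_ae ?_) (by norm_num)
              filter_upwards [h2] with y hy
              exact ENNReal.rpow_le_rpow hy (by norm_num)
          _ = C ^ (1/2:ℝ) := by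
              rw [hCeq]
              congr 1
              exact lintegral_congr fun y => hpow2 (S y)
      rw [ENNReal.le_div_iff_mul_le (Or.inl hρ0) (Or.inl hρtop), mul_comm]
      exact le_trans h1 hGle
    rw [eLpNorm_exponent_top, eLpNormEssSup]
    exact essSup_le_of_ae_le _ hbound
  · -- case p < ∞
    have hp0 : p ≠ 0 := (lt_trans zero_lt_one hp).ne'
    have hp1 : 1 < p.toReal := by
      rw [← ENNReal.toReal_one]
      exact ENNReal.toReal_strict_mono hptop hp
    set p' := p.toReal with hp'def
    have hpq : p'.HolderConjugate (p'/(p'-1)) := Real.HolderConjugate.conjExponent hp1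
    set S : X → ℝ≥0∞ := fun y => (∫⁻ x, K (x, y) ^ p' ∂μ) ^ (1/p') with hSdef
    have hSm : Measurable S :=
      (Measurable.lintegral_prod_left (f := fun x y => K (x, y) ^ p')
        (hKm.pow_const p')).pow_const _
    have hSeq : ∀ y, S y = eLpNorm (fun x => k (x, y)) p μ := fun y => by
      rw [eLpNorm_eq_lintegral_rpow_enorm_toReal hp0 hptop]; rfl
    have hCeq : C = ∫⁻ y, S y ^ 2 ∂μ := by
      refine lintegral_congr_ae ?_
      filter_upwards [hsym'] with x hx
      congr 1
      rw [hSeq]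
      exact eLpNorm_congr_ae hx
    have hFm : Measurable (Function.uncurry fun x y => K (x, y) * g y) :=
      hKm.mul (hgm.comp measurable_snd)
    have hmink := lintegral_minkowski μ μ hpq (F := fun x y => K (x, y) * g y) hFm
    have hrhs : ∀ y, (∫⁻ x, (K (x, y) * g y) ^ p' ∂μ) ^ (1/p') = g y * S y := by
      intro y
      calc (∫⁻ x, (K (x, y) * g y) ^ p' ∂μ) ^ (1/p')
          = (∫⁻ x, K (x, y) ^ p' * g y ^ p' ∂μ) ^ (1/p') := by
            congr 1
            exact lintegral_congr fun x => ENNReal.mul_rpow_of_nonneg _ _ hpq.nonneg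
        _ = ((∫⁻ x, K (x, y) ^ p' ∂μ) * g y ^ p') ^ (1/p') := by
            have hKy : Measurable fun x => K (x, y) := hKm.comp measurable_prodMk_right
            rw [lintegral_mul_const'' _ (hKy.pow_const p').aemeasurable]
        _ = g y * S y := by
            rw [ENNReal.mul_rpow_of_nonneg _ _ hpq.one_div_nonneg, ← ENNReal.rpow_mul,
              mul_one_div, div_self hpq.ne_zero, ENNReal.rpow_one, mul_comm]
    have hCS : ∫⁻ y, g y * S y ∂μ ≤ C ^ (1/2:ℝ) := by
      calc ∫⁻ y, g y * S y ∂μ = ∫⁻ y, (g * S) y ∂μ := rfl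
        _ ≤ (∫⁻ y, g y ^ (2:ℝ) ∂μ) ^ (1/2:ℝ) * (∫⁻ y, S y ^ (2:ℝ) ∂μ) ^ (1/2:ℝ) :=
            ENNReal.lintegral_mul_le_Lp_mul_Lq μ hCS2 hgm.aemeasurable hSm.aemeasurable
        _ = C ^ (1/2:ℝ) := by
            rw [hφ2, ENNReal.one_rpow, one_mul, hCeq]
            congr 1
            exact lintegral_congr fun y => hpow2 (S y)
    have hGp : (∫⁻ x, G x ^ p' ∂μ) ^ (1/p') ≤ C ^ (1/2:ℝ) := by
      refine le_trans hmink ?_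
      exact le_trans (le_of_eq (lintegral_congr hrhs)) hCS
    rw [eLpNorm_eq_lintegral_rpow_enorm_toReal hp0 hptop]
    have hmono : ∫⁻ x, g x ^ p' ∂μ ≤ ∫⁻ x, (G x / ρ) ^ p' ∂μ := by
      refine lintegral_mono_ae ?_
      filter_upwards [hae] with x hx
      refine ENNReal.rpow_le_rpow ?_ hpq.nonneg
      rw [ENNReal.le_div_iff_mul_le (Or.inl hρ0) (Or.inl hρtop), mul_comm]
      exact hx
    have hρp0 : ρ ^ p' ≠ 0 := by
      simp [ENNReal.rpow_eq_zero_iff, hρ0, hρtop]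
    calc (∫⁻ x, g x ^ p' ∂μ) ^ (1/p')
        ≤ (∫⁻ x, (G x / ρ) ^ p' ∂μ) ^ (1/p') := ENNReal.rpow_le_rpow hmono hpq.one_div_nonneg
      _ = (∫⁻ x, G x ^ p' ∂μ) ^ (1/p') / ρ := by
          have h1 : ∫⁻ x, (G x / ρ) ^ p' ∂μ = (∫⁻ x, G x ^ p' ∂μ) * (ρ ^ p')⁻¹ := by
            rw [← lintegral_mul_const' _ _ (ENNReal.inv_ne_top.mpr hρp0)]
            exact lintegral_congr fun x => by
              rw [ENNReal.div_rpow_of_nonneg _ _ hpq.nonneg, div_eq_mul_inv]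
          rw [h1, ← div_eq_mul_inv, ENNReal.div_rpow_of_nonneg _ _ hpq.one_div_nonneg,
            ← ENNReal.rpow_mul, mul_one_div, div_self hpq.ne_zero, ENNReal.rpow_one]
      _ ≤ C ^ (1/2:ℝ) / ρ := ENNReal.div_le_div_right hGp ρ
end

section
/- Let (X, 𝒜, μ) be a measure space with μ(X) < ∞ and let T be a continuous linear operator on the real Hilbert space L²(μ) which is an integral operator with measurable kernel k : X × X → ℝ satisfying k(x,y) = k(y,x) and |k(x,y)| ≤ M for (μ⊗μ)-a.e. (x,y), where M ≥ 0. If φ ∈ L²(μ), ‖φ‖_{L²(μ)} = 1, r > 0 and T φ = r φ, then for every p ∈ [1, ∞]: ‖φ‖_{L^p(μ)} ≤ μ(X)^{1/p + 1/2} · M / r. -/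
open MeasureTheory
open scoped ENNReal

/-- **Theorem 2.10(2).** On a finite measure space, if `T` is an integral operator on `L²(μ)`
with a symmetric measurable kernel bounded a.e. by `M`, then any `L²`-normalized eigenfunction
`φ` with `T φ = r φ`, `r > 0`, satisfies `‖φ‖_{L^p} ≤ μ(X)^{1/p + 1/2} · M / r` for every
`p ∈ [1, ∞]`. -/
theorem stmt7 {X : Type*} [MeasurableSpace X] (μ : Measure X) [IsFiniteMeasure μ]
    (T : Lp ℝ 2 μ →L[ℝ] Lp ℝ 2 μ)
    (k : X × X → ℝ) (hk : Measurable k)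
    (M : ℝ) (hM : 0 ≤ M)
    (hsym : ∀ᵐ z ∂(μ.prod μ), k z = k z.swap)
    (hbd : ∀ᵐ z ∂(μ.prod μ), |k z| ≤ M)
    (hker : ∀ f : Lp ℝ 2 μ, ∀ᵐ x ∂μ, (T f : X → ℝ) x = ∫ y, k (x, y) * f y ∂μ)
    (φ : Lp ℝ 2 μ) (hφ : ‖φ‖ = 1) (r : ℝ) (hr : 0 < r) (hTφ : T φ = r • φ) :
    ∀ p : ℝ≥0∞, 1 ≤ p →
      (eLpNorm (φ : X → ℝ) p μ).toReal ≤
        (μ Set.univ).toReal ^ (1 / p.toReal + 1/2) * M / r := by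
  -- the measure is nonzero
  have hμpos : 0 < (μ Set.univ).toReal := by
    rw [ENNReal.toReal_pos_iff]
    refine ⟨pos_iff_ne_zero.mpr fun h0 => ?_, measure_lt_top μ _⟩
    have hae : (φ : X → ℝ) =ᵐ[μ] 0 := by
      rw [Filter.EventuallyEq, ae_iff]
      exact measure_mono_null (Set.subset_univ _) h0
    rw [Lp.norm_def, eLpNorm_congr_ae hae, eLpNorm_zero] at hφ
    simp at hφ
  have hmem2 : MemLp (φ : X → ℝ) 2 μ := Lp.memLp φ
  have hint : Integrable (φ : X → ℝ) μ :=
    memLp_one_iff_integrable.mp (hmem2.mono_exponent (by norm_num))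
  -- L¹ norm bound via Cauchy-Schwarz
  have hφ2 : (eLpNorm (φ : X → ℝ) 2 μ).toReal = 1 := by rwa [← Lp.norm_def]
  have hL1 : ∫ y, |(φ : X → ℝ) y| ∂μ ≤ (μ Set.univ).toReal ^ (1/2 : ℝ) := by
    have h1 : ENNReal.ofReal (∫ y, ‖(φ : X → ℝ) y‖ ∂μ) = eLpNorm (φ : X → ℝ) 1 μ := by
      rw [ofReal_integral_norm_eq_lintegral_enorm hint, eLpNorm_one_eq_lintegral_enorm]
    have h2 : eLpNorm (φ : X → ℝ) 1 μ ≤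
        eLpNorm (φ : X → ℝ) 2 μ * μ Set.univ ^ (1/2 : ℝ) := by
      have := eLpNorm_le_eLpNorm_mul_rpow_measure_univ (μ := μ)
        (f := (φ : X → ℝ)) (p := 1) (q := 2) (by norm_num) hmem2.aestronglyMeasurable
      convert this using 3
      norm_num
    have hfin : eLpNorm (φ : X → ℝ) 2 μ * μ Set.univ ^ (1/2 : ℝ) ≠ ∞ :=
      ENNReal.mul_ne_top hmem2.eLpNorm_ne_top
        (ENNReal.rpow_ne_top_of_nonneg (by norm_num) (measure_ne_top μ _))
    have h3 := ENNReal.toReal_mono hfin (h1 ▸ h2)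
    rw [ENNReal.toReal_ofReal (integral_nonneg fun y => norm_nonneg _)] at h3
    simp only [Real.norm_eq_abs] at h3
    rw [ENNReal.toReal_mul, hφ2, one_mul, ← ENNReal.toReal_rpow] at h3
    exact h3
  set C : ℝ := M * (μ Set.univ).toReal ^ (1/2 : ℝ) / r with hC
  have hCnn : 0 ≤ C := by positivity
  -- a.e. pointwise bound
  have hbd' : ∀ᵐ x ∂μ, ∀ᵐ y ∂μ, |k (x, y)| ≤ M := Measure.ae_ae_of_ae_prod hbd
  have heig : ∀ᵐ x ∂μ, r * (φ : X → ℝ) x = ∫ y, k (x, y) * (φ : X → ℝ) y ∂μ := by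
    have h1 := hker φ
    have h2 : (T φ : X → ℝ) =ᵐ[μ] fun x => r * (φ : X → ℝ) x := by
      rw [hTφ]
      filter_upwards [Lp.coeFn_smul r φ] with x hx
      simpa using hx
    filter_upwards [h1, h2] with x hx1 hx2
    rw [← hx2, hx1]
  have habs : ∀ᵐ x ∂μ, ‖(φ : X → ℝ) x‖ ≤ C := by
    filter_upwards [heig, hbd'] with x hx hbx
    have hφx : (φ : X → ℝ) x = (∫ y, k (x, y) * (φ : X → ℝ) y ∂μ) / r := by
      field_simp [hr.ne'] at hx ⊢
      linarith [hx]
    have hI : |∫ y, k (x, y) * (φ : X → ℝ) y ∂μ| ≤ M * (μ Set.univ).toReal ^ (1/2 : ℝ) := by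
      calc |∫ y, k (x, y) * (φ : X → ℝ) y ∂μ|
          ≤ ∫ y, |k (x, y)| * |(φ : X → ℝ) y| ∂μ := by
            simpa [Real.norm_eq_abs, abs_mul] using
              norm_integral_le_integral_norm (μ := μ) (fun y => k (x, y) * (φ : X → ℝ) y)
        _ ≤ ∫ y, M * |(φ : X → ℝ) y| ∂μ := by
            refine integral_mono_of_nonneg
              (ae_of_all _ fun y => mul_nonneg (abs_nonneg _) (abs_nonneg _))
              (hint.abs.const_mul M) ?_
            filter_upwards [hbx] with y hy
            exact mul_le_mul_of_nonneg_right hy (abs_nonneg _)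
        _ = M * ∫ y, |(φ : X → ℝ) y| ∂μ := integral_const_mul M _
        _ ≤ M * (μ Set.univ).toReal ^ (1/2 : ℝ) := by
            exact mul_le_mul_of_nonneg_left hL1 hM
    rw [Real.norm_eq_abs, hφx, abs_div, abs_of_pos hr, hC]
    gcongr
  intro p hp
  have hbound := eLpNorm_le_of_ae_bound (μ := μ) (p := p) habs
  have hfin : μ Set.univ ^ p.toReal⁻¹ * ENNReal.ofReal C ≠ ∞ :=
    ENNReal.mul_ne_top
      (ENNReal.rpow_ne_top_of_nonneg (by positivity) (measure_ne_top μ _))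
      ENNReal.ofReal_ne_top
  have h4 := ENNReal.toReal_mono hfin hbound
  rw [ENNReal.toReal_mul, ← ENNReal.toReal_rpow, ENNReal.toReal_ofReal hCnn] at h4
  refine h4.trans_eq ?_
  rw [Real.rpow_add hμpos, one_div, hC]
  ring
end

section
/- Let ν, μ, c₁, c₃ > 0 be real numbers and let 0 < a < b. Then there exists t₀ > 0 such that for all real s, t with 0 < s ≤ t < t₀: c₁ · t^{−ν} · exp(−a / t^{μ}) > c₃ · s^{−ν} · exp(−b / s^{μ}). -/
/-- **Key comparison inequality in Theorem 3.2(2) (local Dirichlet forms).**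
For `ν, μ, c₁, c₃ > 0` and `0 < a < b` there is `t₀ > 0` such that for all
`0 < s ≤ t < t₀` one has `c₁ t^{-ν} exp(-a/t^μ) > c₃ s^{-ν} exp(-b/s^μ)`. -/
theorem stmt9 (ν μ c₁ c₃ a b : ℝ) (hν : 0 < ν) (hμ : 0 < μ) (hc₁ : 0 < c₁) (hc₃ : 0 < c₃)
    (ha : 0 < a) (hab : a < b) :
    ∃ t₀ : ℝ, 0 < t₀ ∧ ∀ s t : ℝ, 0 < s → s ≤ t → t < t₀ →
      c₃ * s ^ (-ν) * Real.exp (-b / s ^ μ) < c₁ * t ^ (-ν) * Real.exp (-a / t ^ μ) := by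
  set ε := (b - a) / 2 with hεdef
  have hε : 0 < ε := by have := sub_pos.2 hab; positivity
  -- step 1: δ₁ so that for 0 < u < δ₁ we have u^{-ν} ≤ exp (ε / u^μ)
  have hlog : Filter.Tendsto (fun u : ℝ => Real.log u * u ^ μ)
      (nhdsWithin 0 (Set.Ioi 0)) (nhds 0) := tendsto_log_mul_rpow_nhdsGT_zero hμ
  have hev : ∀ᶠ u in nhdsWithin 0 (Set.Ioi 0), |Real.log u * u ^ μ| < ε / ν := by
    have := hlog.eventually (Metric.ball_mem_nhds 0 (show (0:ℝ) < ε / ν by positivity))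
    simpa [Real.dist_eq, Metric.mem_ball, abs_mul] using this
  obtain ⟨δ₁, hδ₁, hball⟩ := Metric.mem_nhdsWithin_iff.mp hev
  have key1 : ∀ u : ℝ, 0 < u → u < δ₁ → u ^ (-ν) ≤ Real.exp (ε / u ^ μ) := by
    intro u hu huδ
    have hmem : u ∈ Metric.ball (0:ℝ) δ₁ ∩ Set.Ioi 0 := by
      constructor
      · simpa [Real.dist_eq, abs_of_pos hu] using huδ
      · exact hu
    have h1 : |Real.log u * u ^ μ| < ε / ν := hball hmem
    have hupow : (0:ℝ) < u ^ μ := Real.rpow_pos_of_pos hu μ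
    have h2 : -Real.log u * u ^ μ < ε / ν := by
      calc -Real.log u * u ^ μ = -(Real.log u * u ^ μ) := by ring
        _ ≤ |Real.log u * u ^ μ| := neg_le_abs _
        _ < ε / ν := h1
    have h3 : Real.log u * (-ν) ≤ ε / u ^ μ := by
      rw [lt_div_iff₀ hν] at h2
      rw [le_div_iff₀ hupow]
      nlinarith
    calc u ^ (-ν) = Real.exp (Real.log u * (-ν)) := Real.rpow_def_of_pos hu _
      _ ≤ Real.exp (ε / u ^ μ) := Real.exp_le_exp.2 h3
  -- step 2: δ₂ so that for 0 < t < δ₂ we have c₃ * exp (-ε / t^μ) < c₁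
  set M : ℝ := max 1 (Real.log (c₃ / c₁)) with hMdef
  have hM : 0 < M := lt_of_lt_of_le one_pos (le_max_left _ _)
  set δ₂ : ℝ := (ε / M) ^ μ⁻¹ with hδ₂def
  have hδ₂ : 0 < δ₂ := Real.rpow_pos_of_pos (by positivity) _
  have key2 : ∀ t : ℝ, 0 < t → t < δ₂ → c₃ * Real.exp (-ε / t ^ μ) < c₁ := by
    intro t ht htδ
    have htpow : (0:ℝ) < t ^ μ := Real.rpow_pos_of_pos ht μ
    have h1 : t ^ μ < ε / M := by
      have := Real.rpow_lt_rpow ht.le htδ hμ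
      rwa [Real.rpow_inv_rpow (by positivity) hμ.ne'] at this
    have h2 : M < ε / t ^ μ := by
      rw [lt_div_iff₀ htpow]
      rw [lt_div_iff₀ hM] at h1
      nlinarith
    have h3 : Real.log (c₃ / c₁) < ε / t ^ μ := lt_of_le_of_lt (le_max_right _ _) h2
    have h4 : Real.exp (-ε / t ^ μ) < c₁ / c₃ := by
      have : -(ε / t ^ μ) < Real.log (c₁ / c₃) := by
        rw [Real.log_div hc₁.ne' hc₃.ne'] at *
        rw [Real.log_div hc₃.ne' hc₁.ne'] at h3
        linarith
      have h5 := Real.exp_lt_exp.2 this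
      rw [Real.exp_log (by positivity)] at h5
      rw [neg_div]
      exact h5
    calc c₃ * Real.exp (-ε / t ^ μ) < c₃ * (c₁ / c₃) := by
          exact mul_lt_mul_of_pos_left h4 hc₃
      _ = c₁ := by field_simp
  refine ⟨min δ₁ (min 1 δ₂), by positivity, ?_⟩
  intro s t hs hst ht
  have ht0 : 0 < t := lt_of_lt_of_le hs hst
  have htδ₁ : t < δ₁ := lt_of_lt_of_le ht (min_le_left _ _)
  have ht1 : t < 1 := lt_of_lt_of_le ht ((min_le_right _ _).trans (min_le_left _ _))
  have htδ₂ : t < δ₂ := lt_of_lt_of_le ht ((min_le_right _ _).trans (min_le_right _ _))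
  have hsδ₁ : s < δ₁ := lt_of_le_of_lt hst htδ₁
  have hspow : (0:ℝ) < s ^ μ := Real.rpow_pos_of_pos hs μ
  have htpow : (0:ℝ) < t ^ μ := Real.rpow_pos_of_pos ht0 μ
  have hpowle : s ^ μ ≤ t ^ μ := Real.rpow_le_rpow hs.le hst hμ.le
  have hmono : -(a + ε) / s ^ μ ≤ -(a + ε) / t ^ μ := by
    rw [neg_div, neg_div, neg_le_neg_iff]
    exact div_le_div_of_nonneg_left (by positivity) hspow hpowle
  have htinv : (1:ℝ) ≤ t ^ (-ν) :=
    Real.one_le_rpow_of_pos_of_le_one_of_nonpos ht0 ht1.le (by linarith)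
  calc c₃ * s ^ (-ν) * Real.exp (-b / s ^ μ)
      ≤ c₃ * Real.exp (ε / s ^ μ) * Real.exp (-b / s ^ μ) := by
        gcongr
        exact key1 s hs hsδ₁
    _ = c₃ * Real.exp (-(a + ε) / s ^ μ) := by
        rw [mul_assoc, ← Real.exp_add]
        congr 2
        have : b = a + 2 * ε := by rw [hεdef]; ring
        rw [this]; ring
    _ ≤ c₃ * Real.exp (-(a + ε) / t ^ μ) := by gcongr
    _ = (c₃ * Real.exp (-ε / t ^ μ)) * Real.exp (-a / t ^ μ) := by
        rw [mul_assoc, ← Real.exp_add]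
        congr 2
        ring
    _ < (c₁ * t ^ (-ν)) * Real.exp (-a / t ^ μ) := by
        have inner : c₃ * Real.exp (-ε / t ^ μ) < c₁ * t ^ (-ν) :=
          lt_of_lt_of_le (key2 t ht0 htδ₂) (le_mul_of_one_le_right hc₁.le htinv)
        exact mul_lt_mul_of_pos_right inner (Real.exp_pos _)
end

section
/- Let ν, a, b, d, κ, c₁ > 0 be real numbers with b < d. Then there exists t₀ > 0 such that for all real s, t with 0 < s ≤ t < t₀: c₁ · t^{−ν/2} · exp(−a t − b/t) > κ · s^{−ν/2} · exp(κ s − d/s). -/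
/-- Auxiliary: for `x ≥ 1` and `c > 0`, `x ^ p * exp (-(c * x)) ≤ n! / c ^ n` where `n = ⌈p⌉₊`. -/
lemma aux_rpow_exp_bound (p c : ℝ) (hp : 0 ≤ p) (hc : 0 < c) :
    ∀ x : ℝ, 1 ≤ x → x ^ p * Real.exp (-(c * x)) ≤ (Nat.factorial ⌈p⌉₊ : ℝ) / c ^ (⌈p⌉₊) := by
  intro x hx
  set n := ⌈p⌉₊ with hn
  have hx0 : (0:ℝ) < x := lt_of_lt_of_le one_pos hx
  have h1 : x ^ p ≤ x ^ (n:ℝ) := Real.rpow_le_rpow_of_exponent_le hx (Nat.le_ceil p)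
  have h3 : x ^ (n:ℝ) = x ^ n := Real.rpow_natCast x n
  have h2 : (c * x) ^ n / (Nat.factorial n : ℝ) ≤ Real.exp (c * x) :=
    Real.pow_div_factorial_le_exp (c * x) (by positivity) n
  have h4 : x ^ n ≤ ((Nat.factorial n : ℝ) / c ^ n) * Real.exp (c * x) := by
    rw [mul_pow] at h2
    have hcn : (0:ℝ) < c ^ n := by positivity
    have hfn : (0:ℝ) < (Nat.factorial n : ℝ) := by positivity
    rw [div_le_iff₀ hfn] at h2
    rw [div_mul_eq_mul_div, le_div_iff₀ hcn]
    nlinarith [h2]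
  calc x ^ p * Real.exp (-(c * x)) ≤ x ^ (n:ℝ) * Real.exp (-(c * x)) := by
        gcongr
    _ = x ^ n * Real.exp (-(c * x)) := by rw [h3]
    _ ≤ (((Nat.factorial n : ℝ) / c ^ n) * Real.exp (c * x)) * Real.exp (-(c * x)) := by
        gcongr
    _ = (Nat.factorial n : ℝ) / c ^ n := by
        rw [mul_assoc, ← Real.exp_add]; simp

/-- **Key comparison inequality in Theorem 3.8(2) (sub-Riemannian Dirichlet forms on Lie
groups).** For `ν, a, b, d, κ, c₁ > 0` with `b < d` there exists `t₀ > 0` such that for all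
`0 < s ≤ t < t₀` one has `c₁ t^{-ν/2} exp(-a t - b/t) > κ s^{-ν/2} exp(κ s - d/s)`. -/
theorem stmt11 (ν a b d κ c₁ : ℝ) (hν : 0 < ν) (ha : 0 < a) (hb : 0 < b) (hd : 0 < d)
    (hκ : 0 < κ) (hc₁ : 0 < c₁) (hbd : b < d) :
    ∃ t₀ : ℝ, 0 < t₀ ∧ ∀ s t : ℝ, 0 < s → s ≤ t → t < t₀ →
      κ * s ^ (-(ν / 2)) * Real.exp (κ * s - d / s) <
        c₁ * t ^ (-(ν / 2)) * Real.exp (-a * t - b / t) := by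
  set p := ν / 2 with hp
  have hppos : 0 < p := by positivity
  set ε := d - b with hεdef
  have hεpos : 0 < ε := by simp only [hεdef]; linarith
  set M : ℝ := (Nat.factorial ⌈p⌉₊ : ℝ) / (ε / 2) ^ (⌈p⌉₊) with hM
  have hMpos : 0 < M := by positivity
  set δ : ℝ := c₁ / (κ * M * Real.exp (κ + a)) with hδ
  have hδpos : 0 < δ := by positivity
  set L : ℝ := |Real.log δ| + 1 with hL
  have hLpos : 0 < L := by positivity
  refine ⟨min 1 (ε / (2 * L)), lt_min one_pos (by positivity), ?_⟩
  intro s t hs hst ht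
  set t₀ : ℝ := min 1 (ε / (2 * L)) with ht₀def
  have ht₀pos : 0 < t₀ := lt_min one_pos (by positivity)
  have ht₀le1 : t₀ ≤ 1 := min_le_left _ _
  have ht0 : 0 < t := lt_of_lt_of_le hs hst
  have hs1 : s ≤ 1 := le_trans hst (le_trans ht.le ht₀le1)
  have ht1 : t ≤ 1 := le_trans ht.le ht₀le1
  have hsinv1 : 1 ≤ s⁻¹ := (one_le_inv₀ hs).2 hs1
  -- smallness of exp(-(ε/2) / t₀)
  have hkey : Real.exp (-(ε / 2 * t₀⁻¹)) < δ := by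
    have h1 : t₀ ≤ ε / (2 * L) := min_le_right _ _
    have h3 : (ε / (2 * L))⁻¹ ≤ t₀⁻¹ := inv_anti₀ ht₀pos h1
    have h4 : (ε / (2 * L))⁻¹ = 2 * L / ε := inv_div _ _
    have h5 : L ≤ ε / 2 * t₀⁻¹ := by
      have := mul_le_mul_of_nonneg_left h3 (by positivity : (0:ℝ) ≤ ε / 2)
      rw [h4] at this
      calc L = ε / 2 * (2 * L / ε) := by field_simp
        _ ≤ ε / 2 * t₀⁻¹ := this
    have h6 : -L < Real.log δ := by
      have := neg_abs_le (Real.log δ)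
      simp only [hL]; linarith
    calc Real.exp (-(ε / 2 * t₀⁻¹)) ≤ Real.exp (-L) := by
          apply Real.exp_le_exp.2; linarith
      _ < Real.exp (Real.log δ) := Real.exp_lt_exp.2 h6
      _ = δ := Real.exp_log hδpos
  -- the reduced inequality
  have hsm : Real.exp (-(ε / 2 * s⁻¹)) ≤ Real.exp (-(ε / 2 * t₀⁻¹)) := by
    apply Real.exp_le_exp.2
    have : t₀⁻¹ ≤ s⁻¹ := inv_anti₀ hs (le_trans hst ht.le)
    nlinarith
  have hbound : s ^ (-p) * Real.exp (-(ε / 2 * s⁻¹)) ≤ M := by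
    have h := aux_rpow_exp_bound p (ε / 2) hppos.le (by positivity) s⁻¹ hsinv1
    have hsp : s ^ (-p) = (s⁻¹) ^ p := by
      rw [Real.rpow_neg hs.le, ← Real.inv_rpow hs.le]
    rw [hsp, hM]
    exact h
  have hR : κ * s ^ (-p) * t ^ p * Real.exp (κ * s + a * t + b / t - d / s) < c₁ := by
    have hE : κ * s + a * t + b / t - d / s ≤ (κ + a) - ε * s⁻¹ := by
      have h1 : κ * s ≤ κ := by nlinarith
      have h2 : a * t ≤ a := by nlinarith
      have h3 : b / t ≤ b / s := by
        apply div_le_div_of_nonneg_left hb.le hs hst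
      have h4 : b / s - d / s = -(ε * s⁻¹) := by
        field_simp [hεdef]; try ring
      have h5 : b / t - d / s ≤ -(ε * s⁻¹) := by linarith
      linarith
    have htp1 : t ^ p ≤ 1 := Real.rpow_le_one ht0.le ht1 hppos.le
    calc κ * s ^ (-p) * t ^ p * Real.exp (κ * s + a * t + b / t - d / s)
        ≤ κ * s ^ (-p) * 1 * Real.exp ((κ + a) - ε * s⁻¹) := by
          gcongr
      _ = κ * Real.exp (κ + a) * (s ^ (-p) * Real.exp (-(ε / 2 * s⁻¹)))
            * Real.exp (-(ε / 2 * s⁻¹)) := by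
          rw [show Real.exp ((κ + a) - ε * s⁻¹)
              = Real.exp (κ + a) * Real.exp (-(ε / 2 * s⁻¹)) * Real.exp (-(ε / 2 * s⁻¹)) from by
            rw [← Real.exp_add, ← Real.exp_add]; congr 1; ring]
          ring
      _ ≤ κ * Real.exp (κ + a) * M * Real.exp (-(ε / 2 * t₀⁻¹)) := by
          gcongr
      _ < κ * Real.exp (κ + a) * M * δ := by
          gcongr
      _ = c₁ := by
          rw [hδ]; field_simp
  -- derive the goal from hR
  have hpν : -(ν / 2) = -p := by rw [hp]
  rw [hpν]
  have htp : t ^ p * t ^ (-p) = 1 := by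
    rw [← Real.rpow_add ht0]; simp
  have hexp : Real.exp (κ * s + a * t + b / t - d / s) * Real.exp (-a * t - b / t)
      = Real.exp (κ * s - d / s) := by
    rw [← Real.exp_add]; congr 1; ring
  have hfac : 0 < t ^ (-p) * Real.exp (-a * t - b / t) := by positivity
  calc κ * s ^ (-p) * Real.exp (κ * s - d / s)
      = (κ * s ^ (-p) * t ^ p * Real.exp (κ * s + a * t + b / t - d / s))
          * (t ^ (-p) * Real.exp (-a * t - b / t)) := by
        rw [show (κ * s ^ (-p) * t ^ p * Real.exp (κ * s + a * t + b / t - d / s))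
              * (t ^ (-p) * Real.exp (-a * t - b / t))
            = κ * s ^ (-p) * (t ^ p * t ^ (-p))
              * (Real.exp (κ * s + a * t + b / t - d / s)
                * Real.exp (-a * t - b / t)) from by ring,
          htp, hexp]
        ring
    _ < c₁ * (t ^ (-p) * Real.exp (-a * t - b / t)) :=
        mul_lt_mul_of_pos_right hR hfac
    _ = c₁ * t ^ (-p) * Real.exp (-a * t - b / t) := by ring
end

section
/- Let (U, 𝒜, μ) be a measure space with μ(U) < ∞, let ν, κ > 0, and for each t > 0 let P_t be a continuous linear operator on the real Hilbert space L²(μ) which is an integral operator with measurable kernel k_t : U × U → ℝ satisfying k_t(x,y) = k_t(y,x) and |k_t(x,y)| ≤ κ · t^{−ν/2} · e^{κ t} for (μ⊗μ)-a.e. (x,y). Let φ ∈ L²(μ) with ‖φ‖_{L²(μ)} = 1 and let λ ∈ ℝ with λ + κ > 0 be such that P_t φ = e^{−λ t} φ for every t > 0. Then for every p ∈ [1, ∞]: ‖φ‖_{L^p(μ)} ≤ μ(U)^{1/p + 1/2} · κ · (2e/ν)^{ν/2} · (λ + κ)^{ν/2}. -/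
open MeasureTheory
open scoped ENNReal

/-- **Theorem 3.8(1), eigenfunction bounds on Lie groups.** Suppose that for every `t > 0` the
operator `P_t` on `L²(μ)`, `μ(U) < ∞`, is an integral operator with symmetric measurable kernel
`k_t` satisfying `|k_t| ≤ κ t^{-ν/2} e^{κ t}` a.e. If `φ` is an `L²`-normalized joint
eigenfunction, `P_t φ = e^{-λ t} φ` for all `t > 0`, with `λ + κ > 0`, then for all `p ∈ [1, ∞]`
one has `‖φ‖_{L^p} ≤ μ(U)^{1/p + 1/2} κ (2e/ν)^{ν/2} (λ + κ)^{ν/2}`. -/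
theorem stmt13 {U : Type*} [MeasurableSpace U] (μ : Measure U) [IsFiniteMeasure μ]
    (ν κ : ℝ) (hν : 0 < ν) (hκ : 0 < κ)
    (P : ℝ → (Lp ℝ 2 μ →L[ℝ] Lp ℝ 2 μ)) (k : ℝ → U × U → ℝ)
    (hk : ∀ t : ℝ, 0 < t → Measurable (k t))
    (hsym : ∀ t : ℝ, 0 < t → ∀ᵐ z ∂(μ.prod μ), k t z = k t z.swap)
    (hbd : ∀ t : ℝ, 0 < t →
      ∀ᵐ z ∂(μ.prod μ), |k t z| ≤ κ * t ^ (-(ν / 2)) * Real.exp (κ * t))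
    (hker : ∀ t : ℝ, 0 < t →
      ∀ f : Lp ℝ 2 μ, ∀ᵐ x ∂μ, (P t f : U → ℝ) x = ∫ y, k t (x, y) * f y ∂μ)
    (φ : Lp ℝ 2 μ) (hφ : ‖φ‖ = 1) (lam : ℝ) (hlam : 0 < lam + κ)
    (heig : ∀ t : ℝ, 0 < t → P t φ = Real.exp (-lam * t) • φ) :
    ∀ p : ℝ≥0∞, 1 ≤ p →
      (eLpNorm (φ : U → ℝ) p μ).toReal ≤
        (μ Set.univ).toReal ^ (1 / p.toReal + 1/2) * κ *
          (2 * Real.exp 1 / ν) ^ (ν / 2) * (lam + κ) ^ (ν / 2) := by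
  intro p hp
  -- μ is nonzero
  have hμ0 : μ Set.univ ≠ 0 := by
    intro h0
    have hae : (φ : U → ℝ) =ᵐ[μ] 0 := by
      refine ae_iff.mpr (le_antisymm ?_ (zero_le))
      exact le_trans (measure_mono (Set.subset_univ _)) h0.le
    have : eLpNorm (φ : U → ℝ) 2 μ = 0 := by
      rw [eLpNorm_congr_ae hae]; simp
    rw [Lp.norm_def, this] at hφ
    simp at hφ
  have hμfin : μ Set.univ ≠ ∞ := measure_ne_top μ _
  have hμpos : 0 < (μ Set.univ).toReal := ENNReal.toReal_pos hμ0 hμfin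
  -- the optimal time
  set t₀ : ℝ := ν / (2 * (lam + κ)) with ht₀def
  have ht₀ : 0 < t₀ := div_pos hν (by linarith)
  set M : ℝ := κ * t₀ ^ (-(ν / 2)) * Real.exp (κ * t₀) with hMdef
  have hM : 0 < M :=
    mul_pos (mul_pos hκ (Real.rpow_pos_of_pos ht₀ _)) (Real.exp_pos _)
  -- the constant after optimization
  have hkey : Real.exp (lam * t₀) * M =
      κ * (2 * Real.exp 1 / ν) ^ (ν / 2) * (lam + κ) ^ (ν / 2) := by
    have h1 : (lam + κ) * t₀ = ν / 2 := by
      rw [ht₀def]; field_simp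
    have h2 : Real.exp (lam * t₀) * Real.exp (κ * t₀) = Real.exp 1 ^ (ν / 2) := by
      rw [Real.exp_one_rpow, ← Real.exp_add, ← h1]; ring_nf
    have h3 : t₀ ^ (-(ν / 2)) = (2 * (lam + κ) / ν) ^ (ν / 2) := by
      rw [Real.rpow_neg ht₀.le, ← Real.inv_rpow ht₀.le, ht₀def, inv_div]
    calc Real.exp (lam * t₀) * M
        = κ * ((2 * (lam + κ) / ν) ^ (ν / 2) * Real.exp 1 ^ (ν / 2)) := by
          rw [hMdef, h3, ← h2]; ring
      _ = κ * ((2 * (lam + κ) / ν) * Real.exp 1) ^ (ν / 2) := by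
          rw [← Real.mul_rpow (by positivity) (Real.exp_pos 1).le]
      _ = κ * ((2 * Real.exp 1 / ν) * (lam + κ)) ^ (ν / 2) := by ring_nf
      _ = κ * (2 * Real.exp 1 / ν) ^ (ν / 2) * (lam + κ) ^ (ν / 2) := by
          rw [Real.mul_rpow (by positivity) hlam.le]; ring
  -- φ is integrable with small L¹ norm
  have hmem : MemLp (φ : U → ℝ) 2 μ := Lp.memLp φ
  have hint : Integrable (φ : U → ℝ) μ := hmem.integrable one_le_two
  have hL1 : ∫ y, |(φ : U → ℝ) y| ∂μ ≤ (μ Set.univ).toReal ^ (1/2 : ℝ) := by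
    have e1 : ∫ y, |(φ : U → ℝ) y| ∂μ = (eLpNorm (φ : U → ℝ) 1 μ).toReal := by
      simp only [eLpNorm_one_eq_lintegral_enorm, ← Real.norm_eq_abs]
      exact integral_norm_eq_lintegral_enorm hmem.aestronglyMeasurable
    have e2 : eLpNorm (φ : U → ℝ) 1 μ ≤
        eLpNorm (φ : U → ℝ) 2 μ * μ Set.univ ^ (1/(1:ℝ≥0∞).toReal - 1/(2:ℝ≥0∞).toReal) :=
      eLpNorm_le_eLpNorm_mul_rpow_measure_univ one_le_two hmem.aestronglyMeasurable
    have e2' : eLpNorm (φ : U → ℝ) 1 μ ≤ eLpNorm (φ : U → ℝ) 2 μ * μ Set.univ ^ (1/2 : ℝ) := by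
      convert e2 using 3
      norm_num
    have hfin2 : eLpNorm (φ : U → ℝ) 2 μ * μ Set.univ ^ (1/2 : ℝ) ≠ ∞ :=
      ENNReal.mul_ne_top (Lp.eLpNorm_ne_top φ)
        (ENNReal.rpow_lt_top_of_nonneg (by norm_num) hμfin).ne
    rw [e1]
    calc (eLpNorm (φ : U → ℝ) 1 μ).toReal
        ≤ (eLpNorm (φ : U → ℝ) 2 μ * μ Set.univ ^ (1/2 : ℝ)).toReal :=
          ENNReal.toReal_mono hfin2 e2'
      _ = (μ Set.univ).toReal ^ (1/2 : ℝ) := by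
          rw [ENNReal.toReal_mul, ← Lp.norm_def, hφ, ← ENNReal.toReal_rpow, one_mul]
  -- pointwise bound
  set C : ℝ := (μ Set.univ).toReal ^ (1/2 : ℝ) * κ *
      (2 * Real.exp 1 / ν) ^ (ν / 2) * (lam + κ) ^ (ν / 2) with hCdef
  have hptwise : ∀ᵐ x ∂μ, ‖(φ : U → ℝ) x‖ ≤ C := by
    have hkernel := hker t₀ ht₀ φ
    have hbd' := Measure.ae_ae_of_ae_prod (hbd t₀ ht₀)
    have heq : (P t₀ φ : U → ℝ) =ᵐ[μ] fun x => Real.exp (-lam * t₀) * (φ : U → ℝ) x := by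
      rw [heig t₀ ht₀]
      filter_upwards [Lp.coeFn_smul (Real.exp (-lam * t₀)) φ] with x hx
      simpa using hx
    filter_upwards [hkernel, hbd', heq] with x hx hbx hex
    have hb : ∀ᵐ y ∂μ, |k t₀ (x, y)| ≤ M := hbx
    have step1 : |∫ y, k t₀ (x, y) * (φ : U → ℝ) y ∂μ| ≤ M * ∫ y, |(φ : U → ℝ) y| ∂μ := by
      calc |∫ y, k t₀ (x, y) * (φ : U → ℝ) y ∂μ|
          ≤ ∫ y, |k t₀ (x, y)| * |(φ : U → ℝ) y| ∂μ := by
            simpa [Real.norm_eq_abs, abs_mul] using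
              norm_integral_le_integral_norm (μ := μ) (fun y => k t₀ (x, y) * (φ : U → ℝ) y)
        _ ≤ ∫ y, M * |(φ : U → ℝ) y| ∂μ := by
            refine integral_mono_of_nonneg
              (Filter.Eventually.of_forall fun y => by positivity)
              (hint.abs.const_mul M) ?_
            filter_upwards [hb] with y hy
            exact mul_le_mul_of_nonneg_right hy (abs_nonneg _)
        _ = M * ∫ y, |(φ : U → ℝ) y| ∂μ := integral_const_mul M _
    have hφx : Real.exp (-lam * t₀) * (φ : U → ℝ) x = ∫ y, k t₀ (x, y) * (φ : U → ℝ) y ∂μ := by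
      rw [← hex, hx]
    have : |(φ : U → ℝ) x| ≤ Real.exp (lam * t₀) * (M * ∫ y, |(φ : U → ℝ) y| ∂μ) := by
      have h4 : |(φ : U → ℝ) x| =
          Real.exp (lam * t₀) * |Real.exp (-lam * t₀) * (φ : U → ℝ) x| := by
        rw [abs_mul, abs_of_pos (Real.exp_pos _), ← mul_assoc, ← Real.exp_add]
        simp
      rw [h4, hφx]
      exact mul_le_mul_of_nonneg_left step1 (Real.exp_pos _).le
    rw [Real.norm_eq_abs]
    calc |(φ : U → ℝ) x| ≤ Real.exp (lam * t₀) * (M * ∫ y, |(φ : U → ℝ) y| ∂μ) := this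
      _ ≤ Real.exp (lam * t₀) * (M * (μ Set.univ).toReal ^ (1/2 : ℝ)) := by
          refine mul_le_mul_of_nonneg_left (mul_le_mul_of_nonneg_left hL1 hM.le) (Real.exp_pos _).le
      _ = C := by rw [hCdef]; linear_combination ((μ Set.univ).toReal ^ (1/2 : ℝ)) * hkey
  -- conclude
  have hCpos : 0 ≤ C := by
    rw [hCdef]
    apply mul_nonneg
    apply mul_nonneg
    apply mul_nonneg (Real.rpow_nonneg ENNReal.toReal_nonneg _) hκ.le
    · exact Real.rpow_nonneg (by positivity) _
    · exact Real.rpow_nonneg hlam.le _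
  have hmain : eLpNorm (φ : U → ℝ) p μ ≤ μ Set.univ ^ p.toReal⁻¹ * ENNReal.ofReal C :=
    eLpNorm_le_of_ae_bound hptwise
  have hfin : μ Set.univ ^ p.toReal⁻¹ * ENNReal.ofReal C ≠ ∞ := by
    refine ENNReal.mul_ne_top ?_ ENNReal.ofReal_ne_top
    exact (ENNReal.rpow_lt_top_of_nonneg (inv_nonneg.mpr ENNReal.toReal_nonneg) hμfin).ne
  calc (eLpNorm (φ : U → ℝ) p μ).toReal
      ≤ (μ Set.univ ^ p.toReal⁻¹ * ENNReal.ofReal C).toReal :=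
        ENNReal.toReal_mono hfin hmain
    _ = (μ Set.univ).toReal ^ p.toReal⁻¹ * C := by
        rw [ENNReal.toReal_mul, ENNReal.toReal_rpow, ENNReal.toReal_ofReal hCpos]
    _ = (μ Set.univ).toReal ^ (1 / p.toReal + 1/2) * κ *
          (2 * Real.exp 1 / ν) ^ (ν / 2) * (lam + κ) ^ (ν / 2) := by
        rw [hCdef, Real.rpow_add hμpos, one_div]
        ring
end
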